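/- arXiv:1208.5332 — 6 statements merged into one kernel-verified Lean document; each statement's English description precedes it below -/
import Mathlib

section
/- If the initial concentrations u_1(0), u_2(0), u_3(0), u_4(0) are nonnegative, then any classical solution of the system u_1' = -k_1(u_2)u_1 - δ k_3(u_3) u_2 u_1^δ + η k_4 u_2 + s, u_2' = μ k_3(u_3) u_2 u_1^δ - k_4 u_2, u_3' = -k_2(u_2) u_3, u_4' = n k_1(u_2) u_1 + k_2(u_2) u_3 remains nonnegative in all four components for all t ≥ 0 in its interval of existence. -/
open Set

/-- Key lemma: if `f` solves an ODE on `[0,T]`, starts nonnegative, and whenever `f t < 0`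
its derivative satisfies `L * f t ≤ f' t` (a one-sided Gronwall condition), then `f` stays
nonnegative on `[0,T]`. -/
lemma nonneg_of_ode_aux {T L : ℝ} (hL : 0 ≤ L) {f f' : ℝ → ℝ}
    (hf : ∀ t ∈ Icc (0:ℝ) T, HasDerivAt f (f' t) t)
    (h0 : 0 ≤ f 0)
    (hbd : ∀ t ∈ Icc (0:ℝ) T, f t < 0 → L * f t ≤ f' t) :
    ∀ t ∈ Icc (0:ℝ) T, 0 ≤ f t := by
  intro t ht
  by_contra hneg
  push_neg at hneg
  have hT0 : (0:ℝ) ≤ t := ht.1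
  have hcont : ContinuousOn f (Icc 0 T) := fun s hs => (hf s hs).continuousAt.continuousWithinAt
  have hsub : Icc (0:ℝ) t ⊆ Icc 0 T := Icc_subset_Icc le_rfl ht.2
  set A : Set ℝ := Icc 0 t ∩ f ⁻¹' Ici 0 with hA
  have hAne : A.Nonempty := ⟨0, ⟨left_mem_Icc.2 hT0, h0⟩⟩
  have hAbdd : BddAbove A := ⟨t, fun x hx => hx.1.2⟩
  have hAclosed : IsClosed A :=
    (hcont.mono hsub).preimage_isClosed_of_isClosed isClosed_Icc isClosed_Ici
  set a := sSup A with ha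
  have haA : a ∈ A := hAclosed.csSup_mem hAne hAbdd
  have haIcc : a ∈ Icc 0 t := haA.1
  have hfa : 0 ≤ f a := haA.2
  have hat : a < t := by
    rcases lt_or_eq_of_le haIcc.2 with h | h
    · exact h
    · exfalso; rw [h] at hfa; linarith
  have hneg' : ∀ s, a < s → s ≤ t → f s < 0 := by
    intro s hs1 hs2
    by_contra h
    push_neg at h
    have : s ∈ A := ⟨⟨le_trans haIcc.1 hs1.le, hs2⟩, h⟩
    exact absurd (le_csSup hAbdd this) (not_le.2 hs1)
  set g : ℝ → ℝ := fun s => (-f s) * Real.exp (-L * s) with hg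
  have hmemT : ∀ s ∈ Icc a t, s ∈ Icc (0:ℝ) T := by
    intro s hs
    exact ⟨le_trans haIcc.1 hs.1, le_trans hs.2 ht.2⟩
  have hderg : ∀ s ∈ Icc (0:ℝ) T, HasDerivAt g
      ((-f' s) * Real.exp (-L * s) + (-f s) * (Real.exp (-L * s) * (-L * 1))) s := by
    intro s hs
    exact (hf s hs).neg.mul (((hasDerivAt_id s).const_mul (-L)).exp)
  have hganti : AntitoneOn g (Icc a t) := by
    apply antitoneOn_of_deriv_nonpos (convex_Icc a t)
    · exact fun s hs => ((hderg s (hmemT s hs)).continuousAt).continuousWithinAt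
    · intro s hs
      rw [interior_Icc] at hs
      exact ((hderg s (hmemT s ⟨hs.1.le, hs.2.le⟩)).differentiableAt).differentiableWithinAt
    · intro s hs
      rw [interior_Icc] at hs
      have hsI : s ∈ Icc (0:ℝ) T := hmemT s ⟨hs.1.le, hs.2.le⟩
      have hfs : f s < 0 := hneg' s hs.1 hs.2.le
      rw [(hderg s hsI).deriv]
      have hb := hbd s hsI hfs
      nlinarith [Real.exp_pos (-L * s)]
  have hgt : g t ≤ g a := hganti ⟨le_rfl, hat.le⟩ ⟨hat.le, le_rfl⟩ hat.le
  have h1 : g a ≤ 0 := by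
    have := Real.exp_pos (-L * a)
    simp only [hg]
    nlinarith
  have h2 : 0 < g t := by
    have := Real.exp_pos (-L * t)
    simp only [hg]
    nlinarith
  linarith

/-- Nonnegativity of all four components of the soil-charcoal ODE system
on its interval of existence, given nonnegative initial data. -/
theorem stmt_0
    (δ η μ n k4 s T : ℝ)
    (hδ : 1 ≤ δ) (hη : 0 < η) (hμ : 0 < μ) (hn : 0 < n) (hk4 : 0 < k4) (hs : 0 ≤ s)
    (hT : 0 < T)
    (k1 k2 k3 : ℝ → ℝ)
    (hk1pos : ∀ x, 0 < k1 x) (hk2pos : ∀ x, 0 < k2 x) (hk3pos : ∀ x, 0 < k3 x)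
    (hk1lip : ∃ K, LipschitzWith K k1) (hk2lip : ∃ K, LipschitzWith K k2)
    (hk3lip : ∃ K, LipschitzWith K k3)
    (hk1mono : StrictMono k1) (hk2mono : StrictMono k2) (hk3mono : StrictMono k3)
    (u1 u2 u3 u4 : ℝ → ℝ)
    (h1 : ∀ t ∈ Set.Icc (0:ℝ) T, HasDerivAt u1
      (-(k1 (u2 t)) * u1 t - δ * k3 (u3 t) * u2 t * (u1 t) ^ δ + η * k4 * u2 t + s) t)
    (h2 : ∀ t ∈ Set.Icc (0:ℝ) T, HasDerivAt u2
      (μ * k3 (u3 t) * u2 t * (u1 t) ^ δ - k4 * u2 t) t)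
    (h3 : ∀ t ∈ Set.Icc (0:ℝ) T, HasDerivAt u3 (-(k2 (u2 t)) * u3 t) t)
    (h4 : ∀ t ∈ Set.Icc (0:ℝ) T, HasDerivAt u4 (n * k1 (u2 t) * u1 t + k2 (u2 t) * u3 t) t)
    (h10 : 0 ≤ u1 0) (h20 : 0 ≤ u2 0) (h30 : 0 ≤ u3 0) (h40 : 0 ≤ u4 0) :
    ∀ t ∈ Set.Icc (0:ℝ) T, 0 ≤ u1 t ∧ 0 ≤ u2 t ∧ 0 ≤ u3 t ∧ 0 ≤ u4 t := by
  obtain ⟨K1, hK1⟩ := hk1lip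
  obtain ⟨K2, hK2⟩ := hk2lip
  obtain ⟨K3, hK3⟩ := hk3lip
  have hδ0 : (0:ℝ) < δ := by linarith
  -- continuity of solutions on the interval
  have hc1 : ContinuousOn u1 (Icc 0 T) := fun t ht => (h1 t ht).continuousAt.continuousWithinAt
  have hc2 : ContinuousOn u2 (Icc 0 T) := fun t ht => (h2 t ht).continuousAt.continuousWithinAt
  have hc3 : ContinuousOn u3 (Icc 0 T) := fun t ht => (h3 t ht).continuousAt.continuousWithinAt
  -- continuity of t ↦ (u1 t)^δ
  have hcr : ContinuousOn (fun t => (u1 t) ^ δ) (Icc 0 T) := by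
    intro t ht
    exact ((Real.continuousAt_rpow_const (u1 t) δ (Or.inr hδ0.le)).comp
      (h1 t ht).continuousAt).continuousWithinAt
  -- Step 1: u3 ≥ 0 on [0,T]
  have hu3 : ∀ t ∈ Icc (0:ℝ) T, 0 ≤ u3 t := by
    apply nonneg_of_ode_aux (L := 0) le_rfl h3 h30
    intro t ht hneg
    nlinarith [hk2pos (u2 t)]
  -- Step 2: u2 ≥ 0 on [0,T]
  have hu2 : ∀ t ∈ Icc (0:ℝ) T, 0 ≤ u2 t := by
    have hcc2 : ContinuousOn (fun t => μ * k3 (u3 t) * (u1 t) ^ δ - k4) (Icc 0 T) :=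
      (((continuousOn_const).mul ((hK3.continuous.comp_continuousOn hc3))).mul hcr).sub
        continuousOn_const
    obtain ⟨C2, hC2⟩ := isCompact_Icc.exists_bound_of_continuousOn hcc2
    apply nonneg_of_ode_aux (L := max C2 0) (le_max_right _ _) h2 h20
    intro t ht hneg
    have hb := hC2 t ht
    rw [Real.norm_eq_abs] at hb
    have hc : μ * k3 (u3 t) * (u1 t) ^ δ - k4 ≤ max C2 0 :=
      le_trans (le_trans (le_abs_self _) hb) (le_max_left _ _)
    nlinarith
  -- Step 3: u1 ≥ 0 on [0,T]
  have hu1 : ∀ t ∈ Icc (0:ℝ) T, 0 ≤ u1 t := by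
    obtain ⟨C1, hC1⟩ := isCompact_Icc.exists_bound_of_continuousOn hc1
    set M : ℝ := max C1 1 with hM
    have hM1 : (1:ℝ) ≤ M := le_max_right _ _
    have hMu : ∀ t ∈ Icc (0:ℝ) T, |u1 t| ≤ M := by
      intro t ht
      exact le_trans (by simpa using hC1 t ht) (le_max_left _ _)
    have hcc1 : ContinuousOn
        (fun t => k1 (u2 t) + δ * (k3 (u3 t) * (u2 t * M ^ (δ - 1)))) (Icc 0 T) :=
      (hK1.continuous.comp_continuousOn hc2).add
        ((continuousOn_const).mul ((hK3.continuous.comp_continuousOn hc3).mul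
          (hc2.mul continuousOn_const)))
    obtain ⟨C, hC⟩ := isCompact_Icc.exists_bound_of_continuousOn hcc1
    apply nonneg_of_ode_aux (L := max C 0) (le_max_right _ _) h1 h10
    intro t ht hneg
    set x := u1 t with hx
    have hu2t := hu2 t ht
    have hk3t := hk3pos (u3 t)
    have hk1t := hk1pos (u2 t)
    have hxpos : 0 < -x := by linarith
    -- |x^δ| ≤ M^(δ-1) * |x|
    have habs1 : |x ^ δ| ≤ |x| ^ δ := Real.abs_rpow_le_abs_rpow x δ
    have habs2 : |x| ^ δ = |x| ^ (δ - 1) * |x| := by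
      rw [show δ = (δ - 1) + 1 by ring, Real.rpow_add (abs_pos.2 (ne_of_lt hneg)),
        Real.rpow_one]
      ring_nf
    have habs3 : |x| ^ (δ - 1) ≤ M ^ (δ - 1) :=
      Real.rpow_le_rpow (abs_nonneg x) (hMu t ht) (by linarith)
    have habs : |x ^ δ| ≤ M ^ (δ - 1) * |x| := by
      calc |x ^ δ| ≤ |x| ^ δ := habs1
        _ = |x| ^ (δ - 1) * |x| := habs2
        _ ≤ M ^ (δ - 1) * |x| := mul_le_mul_of_nonneg_right habs3 (abs_nonneg x)
    have habsx : |x| = -x := abs_of_neg hneg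
    rw [habsx] at habs
    -- upper bound on x^δ
    have hxd : x ^ δ ≤ M ^ (δ - 1) * (-x) := le_trans (le_abs_self _) habs
    have hcoef : 0 ≤ δ * k3 (u3 t) * u2 t := by positivity
    have hterm : δ * k3 (u3 t) * u2 t * x ^ δ ≤ δ * k3 (u3 t) * u2 t * (M ^ (δ - 1) * (-x)) :=
      mul_le_mul_of_nonneg_left hxd hcoef
    have hb := hC t ht
    rw [Real.norm_eq_abs] at hb
    have hc : k1 (u2 t) + δ * (k3 (u3 t) * (u2 t * M ^ (δ - 1))) ≤ max C 0 :=
      le_trans (le_trans (le_abs_self _) hb) (le_max_left _ _)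
    have hpos : 0 ≤ η * k4 * u2 t + s := by positivity
    nlinarith [mul_pos hk1t hxpos]
  -- Step 4: u4 ≥ 0 on [0,T]
  have hu4 : ∀ t ∈ Icc (0:ℝ) T, 0 ≤ u4 t := by
    apply nonneg_of_ode_aux (L := 0) le_rfl h4 h40
    intro t ht hneg
    have := add_nonneg (mul_nonneg (mul_nonneg hn.le (hk1pos (u2 t)).le) (hu1 t ht))
      (mul_nonneg (hk2pos (u2 t)).le (hu3 t ht))
    linarith
  exact fun t ht => ⟨hu1 t ht, hu2 t ht, hu3 t ht, hu4 t ht⟩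
end

section
/- For the system with δ ≥ ημ, δ ≥ 1, and nonnegative initial data, the unique local solution extends to a global classical solution on [0,∞). -/
open Set Metric Real Filter
open scoped NNReal Topology

namespace Stmt6

abbrev E3 : Type := ℝ × ℝ × ℝ

/-- Lipschitz-and-bounded on a set. -/
def NiceOn (f : E3 → ℝ) (s : Set E3) : Prop :=
  ∃ K B : ℝ≥0, LipschitzOnWith K f s ∧ ∀ p ∈ s, |f p| ≤ B

theorem NiceOn.mul {f g : E3 → ℝ} {s : Set E3} (hf : NiceOn f s) (hg : NiceOn g s) :
    NiceOn (fun p => f p * g p) s := by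
  obtain ⟨Kf, Bf, hLf, hBf⟩ := hf
  obtain ⟨Kg, Bg, hLg, hBg⟩ := hg
  refine ⟨Kf * Bg + Bf * Kg, Bf * Bg, ?_, ?_⟩
  · rw [lipschitzOnWith_iff_dist_le_mul] at *
    intro x hx y hy
    have h1 := hLf x hx y hy
    have h2 := hLg x hx y hy
    have hbx := hBg x hx
    have hby := hBf y hy
    rw [Real.dist_eq] at h1 h2 ⊢
    have key : |f x * g x - f y * g y| ≤ |f x - f y| * |g x| + |f y| * |g x - g y| := by
      calc |f x * g x - f y * g y| = |(f x - f y) * g x + f y * (g x - g y)| := by ring_nf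
        _ ≤ |(f x - f y) * g x| + |f y * (g x - g y)| := abs_add_le _ _
        _ = |f x - f y| * |g x| + |f y| * |g x - g y| := by rw [abs_mul, abs_mul]
    refine key.trans ?_
    push_cast
    have hd : (0:ℝ) ≤ dist x y := dist_nonneg
    nlinarith [abs_nonneg (f x - f y), abs_nonneg (g x - g y), abs_nonneg (g x), abs_nonneg (f y),
      mul_le_mul_of_nonneg_left hbx (abs_nonneg (f x - f y)),
      mul_le_mul_of_nonneg_right hby (abs_nonneg (g x - g y))]
  · intro p hp
    push_cast
    calc |f p * g p| = |f p| * |g p| := abs_mul _ _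
      _ ≤ Bf * Bg := mul_le_mul (hBf p hp) (hBg p hp) (abs_nonneg _) Bf.2

theorem NiceOn.add {f g : E3 → ℝ} {s : Set E3} (hf : NiceOn f s) (hg : NiceOn g s) :
    NiceOn (fun p => f p + g p) s := by
  obtain ⟨Kf, Bf, hLf, hBf⟩ := hf
  obtain ⟨Kg, Bg, hLg, hBg⟩ := hg
  refine ⟨Kf + Kg, Bf + Bg, ?_, ?_⟩
  · rw [lipschitzOnWith_iff_dist_le_mul] at *
    intro x hx y hy
    have h1 := hLf x hx y hy
    have h2 := hLg x hx y hy
    rw [Real.dist_eq] at h1 h2 ⊢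
    push_cast
    calc |f x + g x - (f y + g y)| = |(f x - f y) + (g x - g y)| := by ring_nf
      _ ≤ |f x - f y| + |g x - g y| := abs_add_le _ _
      _ ≤ (Kf : ℝ) * dist x y + (Kg : ℝ) * dist x y := add_le_add h1 h2
      _ = ((Kf : ℝ) + Kg) * dist x y := by ring
  · intro p hp
    push_cast
    calc |f p + g p| ≤ |f p| + |g p| := abs_add_le _ _
      _ ≤ Bf + Bg := add_le_add (hBf p hp) (hBg p hp)

theorem NiceOn.neg {f : E3 → ℝ} {s : Set E3} (hf : NiceOn f s) :
    NiceOn (fun p => -(f p)) s := by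
  obtain ⟨Kf, Bf, hLf, hBf⟩ := hf
  refine ⟨Kf, Bf, ?_, ?_⟩
  · rw [lipschitzOnWith_iff_dist_le_mul] at *
    intro x hx y hy
    have h1 := hLf x hx y hy
    rw [Real.dist_eq] at h1 ⊢
    have : |-f x - -f y| = |f x - f y| := by rw [← abs_neg]; ring_nf
    rw [this]; exact h1
  · intro p hp
    rw [abs_neg]; exact hBf p hp

theorem NiceOn.sub {f g : E3 → ℝ} {s : Set E3} (hf : NiceOn f s) (hg : NiceOn g s) :
    NiceOn (fun p => f p - g p) s := by
  have := hf.add hg.neg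
  simpa [sub_eq_add_neg] using this

theorem niceOn_const (c : ℝ) (s : Set E3) : NiceOn (fun _ => c) s := by
  refine ⟨0, ‖c‖₊, ?_, ?_⟩
  · exact (LipschitzWith.const c).lipschitzOnWith
  · intro p _
    simp [Real.norm_eq_abs]

theorem NiceOn.compLip {f : E3 → ℝ} {s : Set E3} {k : ℝ → ℝ} {Kk : ℝ≥0}
    (hk : LipschitzWith Kk k) (hf : NiceOn f s) :
    NiceOn (fun p => k (f p)) s := by
  obtain ⟨Kf, Bf, hLf, hBf⟩ := hf
  refine ⟨Kk * Kf, ‖k 0‖₊ + Kk * Bf, hk.comp_lipschitzOnWith hLf, ?_⟩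
  intro p hp
  have h := hk.dist_le_mul (f p) 0
  rw [Real.dist_eq, Real.dist_eq, sub_zero] at h
  have : |k (f p)| ≤ |k 0| + Kk * |f p| := by
    have := abs_sub_abs_le_abs_sub (k (f p)) (k 0)
    linarith
  push_cast
  have h2 : (Kk : ℝ) * |f p| ≤ Kk * Bf := by
    have := hBf p hp
    exact mul_le_mul_of_nonneg_left this Kk.2
  calc |k (f p)| ≤ |k 0| + Kk * |f p| := this
    _ ≤ ‖k 0‖ + Kk * Bf := by rw [Real.norm_eq_abs]; linarith
  
theorem niceOn_x (R : ℝ≥0) : NiceOn (fun p => p.1) (closedBall (0 : E3) R) := by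
  refine ⟨1, R, (LipschitzWith.prod_fst).lipschitzOnWith, ?_⟩
  intro p hp
  rw [mem_closedBall_zero_iff] at hp
  calc |p.1| = ‖p.1‖ := rfl
    _ ≤ ‖p‖ := norm_fst_le p
    _ ≤ R := hp

theorem niceOn_y (R : ℝ≥0) : NiceOn (fun p => p.2.1) (closedBall (0 : E3) R) := by
  refine ⟨1 * 1, R, (LipschitzWith.prod_fst.comp LipschitzWith.prod_snd).lipschitzOnWith, ?_⟩
  intro p hp
  rw [mem_closedBall_zero_iff] at hp
  calc |p.2.1| = ‖p.2.1‖ := rfl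
    _ ≤ ‖p.2‖ := norm_fst_le p.2
    _ ≤ ‖p‖ := (norm_snd_le p).trans_eq rfl |>.trans (le_refl _) |>.trans (le_refl _) |>.trans_eq rfl
    _ ≤ R := hp

theorem niceOn_z (R : ℝ≥0) : NiceOn (fun p => p.2.2) (closedBall (0 : E3) R) := by
  refine ⟨1 * 1, R, (LipschitzWith.prod_snd.comp LipschitzWith.prod_snd).lipschitzOnWith, ?_⟩
  intro p hp
  rw [mem_closedBall_zero_iff] at hp
  calc |p.2.2| = ‖p.2.2‖ := rfl
    _ ≤ ‖p.2‖ := norm_snd_le p.2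
    _ ≤ ‖p‖ := norm_snd_le p
    _ ≤ R := hp

theorem rpow_lipOn {δ : ℝ} (hδ : 1 ≤ δ) {R : ℝ} (hR : 1 ≤ R) :
    LipschitzOnWith (δ * R ^ (δ - 1)).toNNReal (fun x : ℝ => x ^ δ) (Icc (-R) R) := by
  have hδ0 : (0:ℝ) < δ := lt_of_lt_of_le one_pos hδ
  have hR0 : (0:ℝ) < R := lt_of_lt_of_le one_pos hR
  apply (convex_Icc (-R) R).lipschitzOnWith_of_nnnorm_hasDerivWithin_le
    (f' := fun x => δ * x ^ (δ - 1))
  · intro x _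
    exact (Real.hasDerivAt_rpow_const (Or.inr hδ)).hasDerivWithinAt
  · intro x hx
    rw [← NNReal.coe_le_coe, coe_nnnorm, Real.coe_toNNReal _ (by positivity), Real.norm_eq_abs,
      abs_mul, abs_of_pos hδ0]
    have h1 : |x ^ (δ - 1)| ≤ |x| ^ (δ - 1) := Real.abs_rpow_le_abs_rpow _ _
    have h2 : |x| ^ (δ - 1) ≤ R ^ (δ - 1) := by
      apply Real.rpow_le_rpow (abs_nonneg x) _ (by linarith)
      exact abs_le.2 ⟨hx.1, hx.2⟩
    have : |x ^ (δ - 1)| ≤ R ^ (δ - 1) := h1.trans h2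
    nlinarith

/-- clamped rpow of first coordinate is nice. -/
theorem niceOn_rpow {δ : ℝ} (hδ : 1 ≤ δ) (c : ℝ → ℝ) (hc : LipschitzWith 1 c)
    (hcb : ∀ x, |c x| ≤ |x|) (R : ℝ≥0) :
    NiceOn (fun p => (c p.1) ^ δ) (closedBall (0 : E3) R) := by
  set R' : ℝ := max 1 (R : ℝ) with hR'
  have hR'1 : (1:ℝ) ≤ R' := le_max_left _ _
  have hR'0 : (0:ℝ) < R' := lt_of_lt_of_le one_pos hR'1
  have hδ0 : (0:ℝ) < δ := lt_of_lt_of_le one_pos hδ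
  have hmaps : MapsTo (fun p : E3 => c p.1) (closedBall (0 : E3) R) (Icc (-R') R') := by
    intro p hp
    rw [mem_closedBall_zero_iff] at hp
    have h1 : |c p.1| ≤ |p.1| := hcb p.1
    have h2 : |p.1| ≤ R' := by
      calc |p.1| = ‖p.1‖ := rfl
        _ ≤ ‖p‖ := norm_fst_le p
        _ ≤ (R:ℝ) := hp
        _ ≤ R' := le_max_right _ _
    have := h1.trans h2
    exact abs_le.1 this
  have hlipc : LipschitzOnWith 1 (fun p : E3 => c p.1) (closedBall (0 : E3) R) := by
    have : LipschitzWith (1 * 1) (fun p : E3 => c p.1) := hc.comp LipschitzWith.prod_fst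
    simpa using this.lipschitzOnWith
  refine ⟨(δ * R' ^ (δ - 1)).toNNReal * 1, (R' ^ δ).toNNReal, ?_, ?_⟩
  · exact (rpow_lipOn hδ hR'1).comp hlipc hmaps
  · intro p hp
    rw [Real.coe_toNNReal _ (by positivity)]
    have h1 : |(c p.1) ^ δ| ≤ |c p.1| ^ δ := Real.abs_rpow_le_abs_rpow _ _
    have h2 : |c p.1| ^ δ ≤ R' ^ δ := by
      apply Real.rpow_le_rpow (abs_nonneg _) _ hδ0.le
      have := hmaps hp
      exact abs_le.2 ⟨this.1, this.2⟩
    exact h1.trans h2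

/-- The vector field, with a "clamp" `c` applied inside the power. -/
noncomputable def Fg (δ η μ k4 s : ℝ) (k1 k2 k3 : ℝ → ℝ) (c : ℝ → ℝ) (p : E3) : E3 :=
  (-(k1 p.2.1) * p.1 - δ * k3 p.2.2 * p.2.1 * (c p.1) ^ δ + η * k4 * p.2.1 + s,
   μ * k3 p.2.2 * p.2.1 * (c p.1) ^ δ - k4 * p.2.1,
   -(k2 p.2.1) * p.2.2)

def LocLip (G : E3 → E3) : Prop :=
  ∀ R : ℝ≥0, ∃ K : ℝ≥0, LipschitzOnWith K G (closedBall (0 : E3) R)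

theorem lipOn_prod3 {f1 f2 f3 : E3 → ℝ} {s : Set E3} {K1 K2 K3 : ℝ≥0}
    (h1 : LipschitzOnWith K1 f1 s) (h2 : LipschitzOnWith K2 f2 s)
    (h3 : LipschitzOnWith K3 f3 s) :
    LipschitzOnWith (max K1 (max K2 K3)) (fun p => ((f1 p, f2 p, f3 p) : E3)) s := by
  rw [lipschitzOnWith_iff_dist_le_mul] at *
  intro x hx y hy
  have e1 := h1 x hx y hy
  have e2 := h2 x hx y hy
  have e3 := h3 x hx y hy
  have hd : (0:ℝ) ≤ dist x y := dist_nonneg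
  have hK1 : (K1:ℝ) ≤ (max K1 (max K2 K3) : ℝ≥0) := by
    exact_mod_cast le_max_left _ _
  have hK2 : (K2:ℝ) ≤ (max K1 (max K2 K3) : ℝ≥0) := by
    exact_mod_cast le_trans (le_max_left _ _) (le_max_right K1 (max K2 K3))
  have hK3 : (K3:ℝ) ≤ (max K1 (max K2 K3) : ℝ≥0) := by
    exact_mod_cast le_trans (le_max_right _ _) (le_max_right K1 (max K2 K3))
  rw [Prod.dist_eq, Prod.dist_eq]
  apply max_le
  · exact e1.trans (mul_le_mul_of_nonneg_right hK1 hd)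
  · apply max_le
    · exact e2.trans (mul_le_mul_of_nonneg_right hK2 hd)
    · exact e3.trans (mul_le_mul_of_nonneg_right hK3 hd)

theorem locLip_Fg {δ η μ k4 s : ℝ} {k1 k2 k3 : ℝ → ℝ} {c : ℝ → ℝ}
    (hδ : 1 ≤ δ)
    (hk1lip : ∃ K, LipschitzWith K k1) (hk2lip : ∃ K, LipschitzWith K k2)
    (hk3lip : ∃ K, LipschitzWith K k3)
    (hc : LipschitzWith 1 c) (hcb : ∀ x, |c x| ≤ |x|) :
    LocLip (Fg δ η μ k4 s k1 k2 k3 c) := by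
  intro R
  obtain ⟨Kk1, hKk1⟩ := hk1lip
  obtain ⟨Kk2, hKk2⟩ := hk2lip
  obtain ⟨Kk3, hKk3⟩ := hk3lip
  set S := closedBall (0 : E3) R
  have hx := niceOn_x R
  have hy := niceOn_y R
  have hz := niceOn_z R
  have hρ := niceOn_rpow hδ c hc hcb R
  have hk1y : NiceOn (fun p => k1 p.2.1) S := NiceOn.compLip hKk1 hy
  have hk2y : NiceOn (fun p => k2 p.2.1) S := NiceOn.compLip hKk2 hy
  have hk3z : NiceOn (fun p => k3 p.2.2) S := NiceOn.compLip hKk3 hz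
  have h1 : NiceOn (fun p => -(k1 p.2.1) * p.1 - δ * k3 p.2.2 * p.2.1 * (c p.1) ^ δ
      + η * k4 * p.2.1 + s) S := by
    exact (((hk1y.neg.mul hx).sub ((((niceOn_const δ S).mul hk3z).mul hy).mul hρ)).add
      ((niceOn_const (η * k4) S).mul hy)).add (niceOn_const s S)
  have h2 : NiceOn (fun p => μ * k3 p.2.2 * p.2.1 * (c p.1) ^ δ - k4 * p.2.1) S := by
    exact ((((niceOn_const μ S).mul hk3z).mul hy).mul hρ).sub ((niceOn_const k4 S).mul hy)
  have h3 : NiceOn (fun p => -(k2 p.2.1) * p.2.2) S := hk2y.neg.mul hz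
  obtain ⟨L1, B1, hL1, _⟩ := h1
  obtain ⟨L2, B2, hL2, _⟩ := h2
  obtain ⟨L3, B3, hL3, _⟩ := h3
  exact ⟨max L1 (max L2 L3), lipOn_prod3 hL1 hL2 hL3⟩

theorem LocLip.continuous {G : E3 → E3} (hG : LocLip G) : Continuous G := by
  rw [continuous_iff_continuousAt]
  intro x
  obtain ⟨K, hK⟩ := hG (‖x‖₊ + 1)
  have hmem : closedBall (0 : E3) ((‖x‖₊ + 1 : ℝ≥0) : ℝ) ∈ 𝓝 x := by
    apply Filter.mem_of_superset (Metric.ball_mem_nhds x one_pos)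
    intro y hy
    rw [mem_ball] at hy
    rw [mem_closedBall_zero_iff]
    push_cast
    have := norm_sub_norm_le y x
    have h2 : ‖y - x‖ ≤ dist y x := by rw [dist_eq_norm]
    linarith [hy.le]
  exact (hK.continuousOn.continuousAt hmem)

/-- Uniform-time local existence from any starting point in a ball. -/
theorem exists_local {G : E3 → E3} (hG : LocLip G) (R0 : ℝ≥0) :
    ∃ ε : ℝ, 0 < ε ∧ ∀ (t₀ : ℝ) (x₀ : E3), ‖x₀‖ ≤ R0 →
      ∃ f : ℝ → E3, f t₀ = x₀ ∧
        ∀ t ∈ Icc (t₀ - ε) (t₀ + ε), HasDerivWithinAt f (G (f t)) (Icc (t₀ - ε) (t₀ + ε)) t := by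
  obtain ⟨K, hK⟩ := hG (R0 + 1)
  set C : ℝ := max (‖G 0‖ + K * (R0 + 1)) 1 with hC
  have hC1 : (1:ℝ) ≤ C := le_max_right _ _
  have hC0 : (0:ℝ) < C := lt_of_lt_of_le one_pos hC1
  refine ⟨1 / C, by positivity, ?_⟩
  intro t₀ x₀ hx₀
  have hsub : closedBall x₀ 1 ⊆ closedBall (0 : E3) ((R0 + 1 : ℝ≥0) : ℝ) := by
    intro y hy
    rw [mem_closedBall] at hy
    rw [mem_closedBall_zero_iff]
    push_cast
    have h1 : ‖y‖ - ‖x₀‖ ≤ ‖y - x₀‖ := norm_sub_norm_le y x₀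
    have h2 : ‖y - x₀‖ = dist y x₀ := (dist_eq_norm _ _).symm
    linarith
  have hlip : LipschitzOnWith K G (closedBall x₀ 1) := hK.mono hsub
  have hmem0 : (0 : E3) ∈ closedBall (0 : E3) ((R0 + 1 : ℝ≥0) : ℝ) := by
    rw [mem_closedBall_zero_iff, norm_zero]; push_cast; positivity
  have hnorm : ∀ x ∈ closedBall x₀ 1, ‖G x‖ ≤ C := by
    intro x hx
    have hx' : x ∈ closedBall (0 : E3) ((R0 + 1 : ℝ≥0) : ℝ) := hsub hx
    have hd := lipschitzOnWith_iff_dist_le_mul.1 hK x hx' 0 hmem0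
    rw [dist_zero_right] at hd
    have h1 : ‖G x‖ - ‖G 0‖ ≤ ‖G x - G 0‖ := norm_sub_norm_le _ _
    have h2 : ‖G x - G 0‖ = dist (G x) (G 0) := (dist_eq_norm _ _).symm
    have h3 : ‖x‖ ≤ (R0:ℝ) + 1 := by
      rw [mem_closedBall_zero_iff] at hx'; push_cast at hx'; exact hx'
    have h4 : (K:ℝ) * ‖x‖ ≤ (K:ℝ) * ((R0:ℝ) + 1) := by
      exact mul_le_mul_of_nonneg_left h3 K.2
    have h5 : ‖G x‖ ≤ ‖G 0‖ + (K:ℝ) * ((R0:ℝ)+1) := by push_cast at hd ⊢; linarith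
    exact h5.trans (by rw [hC]; push_cast; exact le_max_left _ _)
  have hmemt : t₀ ∈ Icc (t₀ - 1/C) (t₀ + 1/C) := by
    have h : (0:ℝ) < 1/C := by positivity
    exact ⟨by linarith, by linarith⟩
  have hpl : IsPicardLindelof (fun _ => G) (tmin := t₀ - 1/C) (tmax := t₀ + 1/C) ⟨t₀, hmemt⟩
      x₀ 1 0 C.toNNReal K := by
    constructor
    · exact fun t _ => by simpa using hlip
    · exact fun x _ => continuousOn_const
    · intro t _ x hx
      rw [Real.coe_toNNReal _ hC0.le]
      exact hnorm x (by simpa using hx)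
    · simp only [Real.coe_toNNReal _ hC0.le, NNReal.coe_one, NNReal.coe_zero, sub_zero]
      have h : max (t₀ + 1 / C - t₀) (t₀ - (t₀ - 1 / C)) = 1/C := by
        rw [show t₀ + 1 / C - t₀ = 1/C by ring, show t₀ - (t₀ - 1 / C) = 1/C by ring, max_self]
      rw [h, mul_one_div, div_self hC0.ne']
  obtain ⟨f, hf0, hf⟩ := hpl.exists_eq_forall_mem_Icc_hasDerivWithinAt₀
  exact ⟨f, hf0, hf⟩

theorem icc_mem_nhdsWithin_Ici {E : Type*} [NormedAddCommGroup E] [NormedSpace ℝ E] {f : ℝ → E} {v : E}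
    {a b t : ℝ} (h : HasDerivWithinAt f v (Icc a b) t) (ht : t ∈ Ico a b) :
    HasDerivWithinAt f v (Ici t) t := by
  apply h.mono_of_mem_nhdsWithin
  rw [mem_nhdsWithin]
  exact ⟨Iio b, isOpen_Iio, ht.2, fun y hy => ⟨ht.1.trans hy.2, hy.1.le⟩⟩

/-- Sign lemma: if `g 0 ≥ 0` and the derivative is strictly positive wherever `g < 0`,
then `g ≥ 0` on `[0, T]`. -/
theorem nonneg_of_deriv_pos_on_neg {T : ℝ} {g d : ℝ → ℝ}
    (hc : ContinuousOn g (Icc 0 T))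
    (hd : ∀ t ∈ Icc 0 T, HasDerivWithinAt g (d t) (Icc 0 T) t)
    (h0 : 0 ≤ g 0) (hpos : ∀ t ∈ Icc 0 T, g t < 0 → 0 < d t) :
    ∀ t ∈ Icc 0 T, 0 ≤ g t := by
  by_contra hcon
  push_neg at hcon
  obtain ⟨t1, ht1, hneg⟩ := hcon
  have ht10 : 0 ≤ t1 := ht1.1
  set S : Set ℝ := {t ∈ Icc 0 t1 | 0 ≤ g t} with hS
  have hsub : Icc (0:ℝ) t1 ⊆ Icc 0 T := Icc_subset_Icc le_rfl ht1.2
  have hSclosed : IsClosed S :=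
    (hc.mono hsub).preimage_isClosed_of_isClosed isClosed_Icc isClosed_Ici
  have hScpt : IsCompact S := (isCompact_Icc.of_isClosed_subset hSclosed (fun x hx => hx.1))
  have hSne : S.Nonempty := ⟨0, ⟨le_rfl, ht10⟩, h0⟩
  have hτS : sSup S ∈ S := hScpt.sSup_mem hSne
  set τ := sSup S with hτ
  have hτIcc : τ ∈ Icc 0 t1 := hτS.1
  have hgτ : 0 ≤ g τ := hτS.2
  have hτlt : τ < t1 := by
    rcases lt_or_eq_of_le hτIcc.2 with h | h
    · exact h
    · exfalso; rw [h] at hgτ; linarith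
  have hneg' : ∀ σ ∈ Ioc τ t1, g σ < 0 := by
    intro σ hσ
    by_contra hge
    push_neg at hge
    have : σ ∈ S := ⟨⟨hτIcc.1.trans hσ.1.le, hσ.2⟩, hge⟩
    have := le_csSup hScpt.bddAbove this
    linarith [hσ.1]
  have hmono : StrictMonoOn g (Icc τ t1) := by
    apply strictMonoOn_of_deriv_pos (convex_Icc τ t1)
    · exact hc.mono (Icc_subset_Icc hτIcc.1 ht1.2)
    · intro x hx
      rw [interior_Icc] at hx
      have hxT : x ∈ Icc 0 T := ⟨hτIcc.1.trans hx.1.le, (hx.2.trans_le ht1.2).le⟩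
      have hder : HasDerivAt g (d x) x := by
        apply (hd x hxT).hasDerivAt
        apply Icc_mem_nhds (lt_of_le_of_lt hτIcc.1 hx.1) (lt_of_lt_of_le hx.2 ht1.2)
      rw [hder.deriv]
      exact hpos x hxT (hneg' x ⟨hx.1, hx.2.le⟩)
  have : g τ < g t1 := hmono ⟨le_rfl, hτlt.le⟩ ⟨hτlt.le, le_rfl⟩ hτlt
  linarith

/-- If the derivative is `≤ 0` on `[0,T]` then `g t ≤ g 0`. -/
theorem le_init_of_deriv_nonpos {T : ℝ} {g d : ℝ → ℝ}
    (hc : ContinuousOn g (Icc 0 T))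
    (hd : ∀ t ∈ Icc 0 T, HasDerivWithinAt g (d t) (Icc 0 T) t)
    (hnp : ∀ t ∈ Icc 0 T, d t ≤ 0) :
    ∀ t ∈ Icc 0 T, g t ≤ g 0 := by
  intro t ht
  have hanti : AntitoneOn g (Icc 0 T) := by
    apply antitoneOn_of_deriv_nonpos (convex_Icc 0 T) hc
    · intro x hx
      rw [interior_Icc] at hx
      have hxT : x ∈ Icc 0 T := ⟨hx.1.le, hx.2.le⟩
      exact ((hd x hxT).hasDerivAt (Icc_mem_nhds hx.1 hx.2)).differentiableAt.differentiableWithinAt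
    · intro x hx
      rw [interior_Icc] at hx
      have hxT : x ∈ Icc 0 T := ⟨hx.1.le, hx.2.le⟩
      rw [((hd x hxT).hasDerivAt (Icc_mem_nhds hx.1 hx.2)).deriv]
      exact hnp x hxT
  exact hanti ⟨le_rfl, ht.1.trans ht.2⟩ ht ht.1

/-- Grönwall-type: if `g a = 0` and `|d| ≤ C |g|` then `g ≡ 0` on `[a,b]`. -/
theorem eq_zero_of_abs_deriv_le {a b : ℝ} {g d : ℝ → ℝ} {C : ℝ} (hC : 0 ≤ C)
    (hc : ContinuousOn g (Icc a b))
    (hd : ∀ t ∈ Icc a b, HasDerivWithinAt g (d t) (Icc a b) t)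
    (hbound : ∀ t ∈ Icc a b, |d t| ≤ C * |g t|)
    (ha : g a = 0) :
    ∀ t ∈ Icc a b, g t = 0 := by
  intro t ht
  have key := norm_le_gronwallBound_of_norm_deriv_right_le (E := ℝ) (f := g) (f' := d) (a := a)
    (b := b) (δ := 0) (K := C) (ε := 0) hc
    (fun x hx => icc_mem_nhdsWithin_Ici (hd x ⟨hx.1, hx.2.le⟩) hx)
    (by rw [ha]; simp)
    (fun x hx => by
      have := hbound x ⟨hx.1, hx.2.le⟩
      rw [Real.norm_eq_abs, Real.norm_eq_abs]
      linarith)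
  have h := key t ht
  have hzero : gronwallBound 0 C 0 (t - a) = 0 := by
    by_cases hC0 : C = 0 <;> simp [gronwallBound, hC0]
  rw [hzero] at h
  have := norm_nonneg (g t)
  have : ‖g t‖ = 0 := le_antisymm h (norm_nonneg _)
  rwa [norm_eq_zero] at this

/-- Sign preservation for a linear ODE `g' = c t * g`. -/
theorem nonneg_of_linear {T : ℝ} {g c : ℝ → ℝ}
    (hc : ContinuousOn g (Icc 0 T))
    (hd : ∀ t ∈ Icc 0 T, HasDerivWithinAt g (c t * g t) (Icc 0 T) t)
    (hC : ∃ C, ∀ t ∈ Icc 0 T, |c t| ≤ C)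
    (h0 : 0 ≤ g 0) :
    ∀ t ∈ Icc 0 T, 0 ≤ g t := by
  obtain ⟨C, hCb⟩ := hC
  have hC0 : 0 ≤ max C 0 := le_max_right _ _
  by_contra hcon
  push_neg at hcon
  obtain ⟨t1, ht1, hneg⟩ := hcon
  set S : Set ℝ := {t ∈ Icc 0 t1 | 0 ≤ g t} with hS
  have hsub : Icc (0:ℝ) t1 ⊆ Icc 0 T := Icc_subset_Icc le_rfl ht1.2
  have hSclosed : IsClosed S :=
    (hc.mono hsub).preimage_isClosed_of_isClosed isClosed_Icc isClosed_Ici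
  have hScpt : IsCompact S := (isCompact_Icc.of_isClosed_subset hSclosed (fun x hx => hx.1))
  have hSne : S.Nonempty := ⟨0, ⟨le_rfl, ht1.1⟩, h0⟩
  have hτS : sSup S ∈ S := hScpt.sSup_mem hSne
  set τ := sSup S with hτ
  have hτIcc : τ ∈ Icc 0 t1 := hτS.1
  have hgτ : 0 ≤ g τ := hτS.2
  have hτlt : τ < t1 := by
    rcases lt_or_eq_of_le hτIcc.2 with h | h
    · exact h
    · exfalso; rw [h] at hgτ; linarith
  have hneg' : ∀ σ ∈ Ioc τ t1, g σ < 0 := by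
    intro σ hσ
    by_contra hge
    push_neg at hge
    have : σ ∈ S := ⟨⟨hτIcc.1.trans hσ.1.le, hσ.2⟩, hge⟩
    have := le_csSup hScpt.bddAbove this
    linarith [hσ.1]
  -- g τ = 0 by continuity from the right
  have hgτ0 : g τ = 0 := by
    refine le_antisymm ?_ hgτ
    have hcw : ContinuousWithinAt g (Ioc τ t1) τ := by
      apply (hc.continuousWithinAt ⟨hτIcc.1, hτIcc.2.trans ht1.2⟩).mono
      intro y hy
      exact ⟨hτIcc.1.trans hy.1.le, hy.2.trans ht1.2⟩
    have hne : (𝓝[Ioc τ t1] τ).NeBot := by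
      rw [nhdsWithin_Ioc_eq_nhdsGT hτlt]
      infer_instance
    apply le_of_tendsto hcw
    filter_upwards [self_mem_nhdsWithin] with σ hσ
    exact (hneg' σ hσ).le
  -- Grönwall on [τ, t1]
  have := eq_zero_of_abs_deriv_le (a := τ) (b := t1) (C := max C 0) hC0
    (hc.mono (Icc_subset_Icc hτIcc.1 ht1.2))
    (fun t ht => (hd t ⟨hτIcc.1.trans ht.1, ht.2.trans ht1.2⟩).mono
      (Icc_subset_Icc hτIcc.1 ht1.2))
    (fun t ht => by
      rw [abs_mul]
      have h1 := hCb t ⟨hτIcc.1.trans ht.1, ht.2.trans ht1.2⟩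
      have h2 : |c t| ≤ max C 0 := h1.trans (le_max_left _ _)
      exact mul_le_mul_of_nonneg_right h2 (abs_nonneg _)) hgτ0
  have := this t1 ⟨hτlt.le, le_rfl⟩
  linarith

/-- Forward uniqueness for a locally Lipschitz autonomous field. -/
theorem uniq {G : E3 → E3} (hG : LocLip G) {T : ℝ} {f g : ℝ → E3}
    (hf : ContinuousOn f (Icc 0 T))
    (hf' : ∀ t ∈ Ico 0 T, HasDerivWithinAt f (G (f t)) (Ici t) t)
    (hg : ContinuousOn g (Icc 0 T))
    (hg' : ∀ t ∈ Ico 0 T, HasDerivWithinAt g (G (g t)) (Ici t) t)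
    (h0 : f 0 = g 0) :
    EqOn f g (Icc 0 T) := by
  obtain ⟨Cf, hCf⟩ := isCompact_Icc.exists_bound_of_continuousOn hf
  obtain ⟨Cg, hCg⟩ := isCompact_Icc.exists_bound_of_continuousOn hg
  set R : ℝ≥0 := (max Cf Cg).toNNReal with hR
  obtain ⟨K, hK⟩ := hG R
  apply ODE_solution_unique_of_mem_Icc_right (v := fun _ => G)
    (s := fun _ => closedBall (0:E3) R) (fun _ _ => hK) hf hf' ?_ hg hg' ?_ h0
  · intro t ht
    rw [mem_closedBall_zero_iff]
    refine (hCf t ⟨ht.1, ht.2.le⟩).trans ?_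
    rw [hR, Real.coe_toNNReal']
    exact le_max_of_le_left (le_max_left _ _)
  · intro t ht
    rw [mem_closedBall_zero_iff]
    refine (hCg t ⟨ht.1, ht.2.le⟩).trans ?_
    rw [hR, Real.coe_toNNReal']
    exact le_max_of_le_left (le_max_right _ _)

theorem apriori {δ η μ k4 s : ℝ} {k1 k2 k3 : ℝ → ℝ}
    (hδ : 1 ≤ δ) (hη : 0 < η) (hμ : 0 < μ) (hk4 : 0 < k4) (hs : 0 ≤ s) (hδημ : η * μ ≤ δ)
    (hk1pos : ∀ x, 0 < k1 x) (hk2pos : ∀ x, 0 < k2 x) (hk3pos : ∀ x, 0 < k3 x)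
    (hk3lip : ∃ K : ℝ≥0, LipschitzWith K k3)
    {a1 a2 a3 : ℝ} (ha1 : 0 ≤ a1) (ha2 : 0 ≤ a2) (ha3 : 0 ≤ a3)
    {T : ℝ} (hT : 0 ≤ T) {f : ℝ → E3}
    (h0 : f 0 = (a1, a2, a3))
    (hf' : ∀ t ∈ Icc 0 T, HasDerivWithinAt f
      (Fg δ η μ k4 s k1 k2 k3 (fun x => max x 0) (f t)) (Icc 0 T) t) :
    ∀ t ∈ Icc 0 T,
      0 ≤ (f t).1 ∧ 0 ≤ (f t).2.1 ∧ 0 ≤ (f t).2.2 ∧ (f t).2.2 ≤ a3 ∧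
        (f t).1 + (δ / μ) * (f t).2.1 ≤ a1 + (δ / μ) * a2 + s * T := by
  set Fc := Fg δ η μ k4 s k1 k2 k3 (fun x => max x 0) with hFc
  have hδ0 : (0:ℝ) < δ := lt_of_lt_of_le one_pos hδ
  have hcont : ContinuousOn f (Icc 0 T) := fun t ht => (hf' t ht).continuousWithinAt
  -- component derivatives
  have h1 : ∀ t ∈ Icc 0 T, HasDerivWithinAt (fun τ => (f τ).1) ((Fc (f t)).1) (Icc 0 T) t := by
    intro t ht
    exact (hasFDerivAt_fst.comp_hasDerivWithinAt t (hf' t ht))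
  have h23 : ∀ t ∈ Icc 0 T, HasDerivWithinAt (fun τ => (f τ).2) ((Fc (f t)).2) (Icc 0 T) t := by
    intro t ht
    exact (hasFDerivAt_snd.comp_hasDerivWithinAt t (hf' t ht))
  have h2 : ∀ t ∈ Icc 0 T, HasDerivWithinAt (fun τ => (f τ).2.1) ((Fc (f t)).2.1) (Icc 0 T) t := by
    intro t ht
    exact (hasFDerivAt_fst.comp_hasDerivWithinAt t (h23 t ht))
  have h3 : ∀ t ∈ Icc 0 T, HasDerivWithinAt (fun τ => (f τ).2.2) ((Fc (f t)).2.2) (Icc 0 T) t := by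
    intro t ht
    exact (hasFDerivAt_snd.comp_hasDerivWithinAt t (h23 t ht))
  have hcont1 : ContinuousOn (fun τ => (f τ).1) (Icc 0 T) := continuous_fst.comp_continuousOn hcont
  have hcont2 : ContinuousOn (fun τ => (f τ).2.1) (Icc 0 T) :=
    continuous_fst.comp_continuousOn (continuous_snd.comp_continuousOn hcont)
  have hcont3 : ContinuousOn (fun τ => (f τ).2.2) (Icc 0 T) :=
    continuous_snd.comp_continuousOn (continuous_snd.comp_continuousOn hcont)
  have hinit1 : (f 0).1 = a1 := by rw [h0]
  have hinit2 : (f 0).2.1 = a2 := by rw [h0]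
  have hinit3 : (f 0).2.2 = a3 := by rw [h0]
  -- u3 ≥ 0
  have hu3 : ∀ t ∈ Icc 0 T, 0 ≤ (f t).2.2 := by
    apply nonneg_of_deriv_pos_on_neg hcont3 h3 (by rw [hinit3]; exact ha3)
    intro t _ hneg
    show 0 < -(k2 (f t).2.1) * (f t).2.2
    exact mul_pos_of_neg_of_neg (neg_neg_of_pos (hk2pos _)) hneg
  -- u3 ≤ a3
  have hu3' : ∀ t ∈ Icc 0 T, (f t).2.2 ≤ a3 := by
    intro t ht
    have := le_init_of_deriv_nonpos hcont3 h3 ?_ t ht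
    · rwa [hinit3] at this
    · intro τ hτ
      show -(k2 (f τ).2.1) * (f τ).2.2 ≤ 0
      exact mul_nonpos_of_nonpos_of_nonneg (neg_nonpos_of_nonneg (hk2pos _).le) (hu3 τ hτ)
  -- continuity of rpow
  have hrpow : Continuous (fun x : ℝ => x ^ δ) := by
    rw [continuous_iff_continuousAt]
    exact fun x => Real.continuousAt_rpow_const x δ (Or.inr hδ0.le)
  have hk3cont : Continuous k3 := by
    obtain ⟨K, hK⟩ := hk3lip; exact hK.continuous
  -- u2 ≥ 0
  have hu2 : ∀ t ∈ Icc 0 T, 0 ≤ (f t).2.1 := by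
    apply nonneg_of_linear (c := fun t => μ * k3 (f t).2.2 * (max (f t).1 0) ^ δ - k4) hcont2
    · intro t ht
      have := h2 t ht
      have heq : (Fc (f t)).2.1
          = (μ * k3 (f t).2.2 * (max (f t).1 0) ^ δ - k4) * (f t).2.1 := by
        show μ * k3 (f t).2.2 * (f t).2.1 * (max (f t).1 0) ^ δ - k4 * (f t).2.1 = _
        ring
      rwa [heq] at this
    · have hc : ContinuousOn (fun t => μ * k3 (f t).2.2 * (max (f t).1 0) ^ δ - k4) (Icc 0 T) := by
        apply ContinuousOn.sub _ continuousOn_const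
        apply ContinuousOn.mul
        · exact continuousOn_const.mul (hk3cont.comp_continuousOn hcont3)
        · exact hrpow.comp_continuousOn ((continuous_id.max continuous_const).comp_continuousOn hcont1)
      obtain ⟨C, hC⟩ := isCompact_Icc.exists_bound_of_continuousOn hc
      exact ⟨C, fun t ht => by rw [← Real.norm_eq_abs]; exact hC t ht⟩
    · rw [hinit2]; exact ha2
  -- u1 ≥ 0
  have hu1 : ∀ t ∈ Icc 0 T, 0 ≤ (f t).1 := by
    apply nonneg_of_deriv_pos_on_neg hcont1 h1 (by rw [hinit1]; exact ha1)
    intro t ht hneg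
    show 0 < -(k1 (f t).2.1) * (f t).1 - δ * k3 (f t).2.2 * (f t).2.1 * (max (f t).1 0) ^ δ
      + η * k4 * (f t).2.1 + s
    rw [max_eq_right hneg.le, Real.zero_rpow hδ0.ne']
    have hx : 0 < -(k1 (f t).2.1) * (f t).1 :=
      mul_pos_of_neg_of_neg (neg_neg_of_pos (hk1pos _)) hneg
    have hy : 0 ≤ η * k4 * (f t).2.1 :=
      mul_nonneg (mul_nonneg hη.le hk4.le) (hu2 t ht)
    nlinarith
  -- energy estimate
  intro t ht
  refine ⟨hu1 t ht, hu2 t ht, hu3 t ht, hu3' t ht, ?_⟩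
  set gE : ℝ → ℝ := fun τ => (f τ).1 + (δ / μ) * (f τ).2.1 - s * τ with hgE
  have hgEd : ∀ τ ∈ Icc 0 T, HasDerivWithinAt gE
      ((Fc (f τ)).1 + (δ / μ) * (Fc (f τ)).2.1 - s) (Icc 0 T) τ := by
    intro τ hτ
    have hlin : HasDerivWithinAt (fun σ : ℝ => s * σ) s (Icc 0 T) τ := by
      simpa using ((hasDerivAt_id τ).const_mul s).hasDerivWithinAt
    exact ((h1 τ hτ).add ((h2 τ hτ).const_mul (δ / μ))).sub hlin
  have hgEcont : ContinuousOn gE (Icc 0 T) :=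
    (hcont1.add (continuousOn_const.mul hcont2)).sub (continuousOn_const.mul continuousOn_id)
  have hEbound := le_init_of_deriv_nonpos hgEcont hgEd ?_ t ht
  · have hg0 : gE 0 = a1 + (δ / μ) * a2 := by
      rw [hgE]; simp [hinit1, hinit2]
    rw [hg0] at hEbound
    have hst : s * t ≤ s * T := mul_le_mul_of_nonneg_left ht.2 hs
    rw [hgE] at hEbound
    simp only at hEbound
    linarith
  · intro τ hτ
    have heq : (Fc (f τ)).1 + (δ / μ) * (Fc (f τ)).2.1 - s
        = -(k1 (f τ).2.1) * (f τ).1 + (η - δ / μ) * (k4 * (f τ).2.1) := by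
      show -(k1 (f τ).2.1) * (f τ).1 - δ * k3 (f τ).2.2 * (f τ).2.1 * (max (f τ).1 0) ^ δ
          + η * k4 * (f τ).2.1 + s
          + (δ / μ) * (μ * k3 (f τ).2.2 * (f τ).2.1 * (max (f τ).1 0) ^ δ - k4 * (f τ).2.1)
          - s = _
      field_simp
      ring
    rw [heq]
    have h1' : -(k1 (f τ).2.1) * (f τ).1 ≤ 0 :=
      mul_nonpos_of_nonpos_of_nonneg (neg_nonpos_of_nonneg (hk1pos _).le) (hu1 τ hτ)
    have hηle : η ≤ δ / μ := (le_div_iff₀ hμ).2 hδημ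
    have h2' : (η - δ / μ) * (k4 * (f τ).2.1) ≤ 0 :=
      mul_nonpos_of_nonpos_of_nonneg (by linarith) (mul_nonneg hk4.le (hu2 τ hτ))
    linarith

def IsSol (G : E3 → E3) (x₀ : E3) (f : ℝ → E3) (T : ℝ) : Prop :=
  f 0 = x₀ ∧ ∀ t ∈ Icc 0 T, HasDerivWithinAt f (G (f t)) (Icc 0 T) t

theorem IsSol.mono {G : E3 → E3} {x₀ : E3} {f : ℝ → E3} {T T' : ℝ}
    (h : IsSol G x₀ f T) (h1 : T' ≤ T) : IsSol G x₀ f T' := by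
  refine ⟨h.1, fun t ht => ?_⟩
  exact (h.2 t ⟨ht.1, ht.2.trans h1⟩).mono (Icc_subset_Icc le_rfl h1)

theorem glue {G : E3 → E3} {x₀ : E3} {T ε : ℝ} (hT : 0 ≤ T) (hε : 0 < ε) {f g : ℝ → E3}
    (hf : IsSol G x₀ f T) (hgT : g T = f T)
    (hg : ∀ t ∈ Icc (T - ε) (T + ε), HasDerivWithinAt g (G (g t)) (Icc (T - ε) (T + ε)) t) :
    ∃ h : ℝ → E3, IsSol G x₀ h (T + ε) := by
  classical
  set h : ℝ → E3 := fun t => if t ≤ T then f t else g t with hh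
  have hA : ∀ t ∈ Icc (0:ℝ) T, h t = f t := fun t ht => if_pos ht.2
  have hB : ∀ t ∈ Icc T (T + ε), h t = g t := by
    intro t ht
    by_cases h' : t ≤ T
    · have : t = T := le_antisymm h' ht.1
      rw [hh]; simp only [this, if_pos le_rfl, hgT]
    · exact if_neg h'
  have hsub : Icc T (T + ε) ⊆ Icc (T - ε) (T + ε) := Icc_subset_Icc (by linarith) le_rfl
  have HA : ∀ t ∈ Icc (0:ℝ) T, HasDerivWithinAt h (G (h t)) (Icc 0 T) t := by
    intro t ht
    have := (hf.2 t ht).congr hA (hA t ht)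
    rwa [hA t ht]
  have HB : ∀ t ∈ Icc T (T + ε), HasDerivWithinAt h (G (h t)) (Icc T (T + ε)) t := by
    intro t ht
    have := ((hg t (hsub ht)).mono hsub).congr hB (hB t ht)
    rwa [hB t ht]
  refine ⟨h, ?_, ?_⟩
  · rw [hA 0 ⟨le_rfl, hT⟩]; exact hf.1
  · intro t ht
    rcases lt_trichotomy t T with hlt | heq | hgt
    · apply (HA t ⟨ht.1, hlt.le⟩).mono_of_mem_nhdsWithin
      rw [mem_nhdsWithin]
      exact ⟨Iio T, isOpen_Iio, hlt, fun y hy => ⟨hy.2.1, hy.1.le⟩⟩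
    · subst heq
      rw [show Icc (0:ℝ) (t + ε) = Icc 0 t ∪ Icc t (t + ε) from
        (Icc_union_Icc_eq_Icc hT (by linarith)).symm]
      exact (HA t ⟨hT, le_rfl⟩).union (HB t ⟨le_rfl, by linarith⟩)
    · apply (HB t ⟨hgt.le, ht.2⟩).mono_of_mem_nhdsWithin
      rw [mem_nhdsWithin]
      exact ⟨Ioi T, isOpen_Ioi, hgt, fun y hy => ⟨hy.1.le, hy.2.2⟩⟩

theorem global_sol {G : E3 → E3} (hG : LocLip G) {x₀ : E3}
    (hbb : ∀ T : ℝ, 0 ≤ T → ∃ R : ℝ≥0, ∀ (f : ℝ → E3) (T' : ℝ), 0 ≤ T' → T' ≤ T →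
      IsSol G x₀ f T' → ∀ t ∈ Icc 0 T', ‖f t‖ ≤ R) :
    ∀ T : ℝ, 0 ≤ T → ∃ f, IsSol G x₀ f T := by
  intro T₀ hT₀
  obtain ⟨R, hR⟩ := hbb T₀ hT₀
  set A : Set ℝ := {T | 0 ≤ T ∧ T ≤ T₀ ∧ ∃ f, IsSol G x₀ f T} with hA
  -- base point
  obtain ⟨ε₀, hε₀, hloc₀⟩ := exists_local hG ‖x₀‖₊
  obtain ⟨f₀, hf₀0, hf₀⟩ := hloc₀ 0 x₀ le_rfl
  have hbase : min ε₀ T₀ ∈ A := by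
    refine ⟨le_min hε₀.le hT₀, min_le_right _ _, f₀, hf₀0, ?_⟩
    intro t ht
    have hsub : Icc (0:ℝ) (min ε₀ T₀) ⊆ Icc (0 - ε₀) (0 + ε₀) := by
      apply Icc_subset_Icc <;> [linarith; simp [min_le_left ε₀ T₀]]
    exact (hf₀ t (hsub ht)).mono hsub
  have hAne : A.Nonempty := ⟨_, hbase⟩
  have hAbdd : BddAbove A := ⟨T₀, fun x hx => hx.2.1⟩
  set τ := sSup A with hτ
  -- uniform local existence time near radius R
  obtain ⟨ε, hε, hloc⟩ := exists_local hG R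
  have hτA : τ - ε / 2 < τ := by linarith
  obtain ⟨T, hTA, hTgt⟩ := exists_lt_of_lt_csSup hAne hτA
  obtain ⟨hT0, hTT₀, f, hf⟩ := hTA
  have hbound := hR f T hT0 hTT₀ hf
  have hfT : ‖f T‖ ≤ R := hbound T ⟨hT0, le_rfl⟩
  obtain ⟨g, hgT, hg⟩ := hloc T (f T) hfT
  obtain ⟨h, hh⟩ := glue hT0 hε hf hgT hg
  have hτle : τ ≤ T₀ := csSup_le hAne (fun x hx => hx.2.1)
  have hkey : T₀ ≤ T + ε := by
    by_contra hcon
    push_neg at hcon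
    have : T + ε ∈ A := ⟨by linarith, hcon.le, h, hh⟩
    have := le_csSup hAbdd this
    have hτT : T ≤ τ := le_csSup hAbdd ⟨hT0, hTT₀, f, hf⟩
    linarith
  exact ⟨h, hh.mono hkey⟩

end Stmt6

open Stmt6 Set Metric Real Filter
open scoped NNReal Topology

/-- Global solvability. Under δ ≥ 1, δ ≥ ημ, positivity, Lipschitz and
monotonicity assumptions on the reaction constants, for any nonnegative initial data
the system has a unique global classical solution on [0,∞). -/
theorem stmt_6
    (δ η μ n k4 s : ℝ)
    (hδ : 1 ≤ δ) (hη : 0 < η) (hμ : 0 < μ) (hn : 0 < n) (hk4 : 0 < k4) (hs : 0 ≤ s)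
    (hδημ : η * μ ≤ δ)
    (k1 k2 k3 : ℝ → ℝ)
    (hk1pos : ∀ x, 0 < k1 x) (hk2pos : ∀ x, 0 < k2 x) (hk3pos : ∀ x, 0 < k3 x)
    (hk1lip : ∃ K, LipschitzWith K k1) (hk2lip : ∃ K, LipschitzWith K k2)
    (hk3lip : ∃ K, LipschitzWith K k3)
    (hk1mono : StrictMono k1) (hk2mono : StrictMono k2) (hk3mono : StrictMono k3)
    (a1 a2 a3 a4 : ℝ) (ha1 : 0 ≤ a1) (ha2 : 0 ≤ a2) (ha3 : 0 ≤ a3) (ha4 : 0 ≤ a4) :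
    ∃ u1 u2 u3 u4 : ℝ → ℝ,
      u1 0 = a1 ∧ u2 0 = a2 ∧ u3 0 = a3 ∧ u4 0 = a4 ∧
      (∀ t, 0 ≤ t → HasDerivAt u1
        (-(k1 (u2 t)) * u1 t - δ * k3 (u3 t) * u2 t * (u1 t) ^ δ + η * k4 * u2 t + s) t) ∧
      (∀ t, 0 ≤ t → HasDerivAt u2
        (μ * k3 (u3 t) * u2 t * (u1 t) ^ δ - k4 * u2 t) t) ∧
      (∀ t, 0 ≤ t → HasDerivAt u3 (-(k2 (u2 t)) * u3 t) t) ∧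
      (∀ t, 0 ≤ t → HasDerivAt u4 (n * k1 (u2 t) * u1 t + k2 (u2 t) * u3 t) t) ∧
      (∀ v1 v2 v3 v4 : ℝ → ℝ,
        v1 0 = a1 → v2 0 = a2 → v3 0 = a3 → v4 0 = a4 →
        (∀ t, 0 ≤ t → HasDerivAt v1
          (-(k1 (v2 t)) * v1 t - δ * k3 (v3 t) * v2 t * (v1 t) ^ δ + η * k4 * v2 t + s) t) →
        (∀ t, 0 ≤ t → HasDerivAt v2
          (μ * k3 (v3 t) * v2 t * (v1 t) ^ δ - k4 * v2 t) t) →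
        (∀ t, 0 ≤ t → HasDerivAt v3 (-(k2 (v2 t)) * v3 t) t) →
        (∀ t, 0 ≤ t → HasDerivAt v4 (n * k1 (v2 t) * v1 t + k2 (v2 t) * v3 t) t) →
        ∀ t, 0 ≤ t → v1 t = u1 t ∧ v2 t = u2 t ∧ v3 t = u3 t ∧ v4 t = u4 t) := by
  classical
  have hδ0 : (0:ℝ) < δ := lt_of_lt_of_le one_pos hδ
  -- the clamp
  set c : ℝ → ℝ := fun x => max x 0 with hc
  have hclip : LipschitzWith 1 c := by
    have := LipschitzWith.id.max (LipschitzWith.const (0:ℝ))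
    simpa [hc] using this
  have hcb : ∀ x, |c x| ≤ |x| := by
    intro x
    rcases le_or_gt x 0 with h | h
    · show |max x 0| ≤ |x|
      rw [max_eq_right h, abs_zero]
      exact abs_nonneg x
    · show |max x 0| ≤ |x|
      rw [max_eq_left h.le]
  set Fc := Fg δ η μ k4 s k1 k2 k3 (fun x => max x 0) with hFc
  set Fo := Fg δ η μ k4 s k1 k2 k3 id with hFo
  have locFc : LocLip Fc := locLip_Fg hδ hk1lip hk2lip hk3lip hclip hcb
  have locFo : LocLip Fo := locLip_Fg hδ hk1lip hk2lip hk3lip LipschitzWith.id (fun x => le_rfl)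
  set x₀ : E3 := (a1, a2, a3) with hx₀
  -- a-priori norm bound
  have hbb : ∀ T : ℝ, 0 ≤ T → ∃ R : ℝ≥0, ∀ (f : ℝ → E3) (T' : ℝ), 0 ≤ T' → T' ≤ T →
      IsSol Fc x₀ f T' → ∀ t ∈ Icc 0 T', ‖f t‖ ≤ R := by
    intro T hT
    set B : ℝ := a1 + (δ / μ) * a2 + s * T with hB
    have hB0 : 0 ≤ B := by
      have h1 : 0 ≤ (δ/μ) * a2 := mul_nonneg (by positivity) ha2
      have h2 : 0 ≤ s * T := mul_nonneg hs hT
      rw [hB]; linarith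
    clear_value B
    refine ⟨(max B (max ((μ/δ) * B) a3)).toNNReal, ?_⟩
    intro f T' hT'0 hT'T hsol t ht
    have hap := apriori hδ hη hμ hk4 hs hδημ hk1pos hk2pos hk3pos hk3lip ha1 ha2 ha3 hT'0
      hsol.1 hsol.2 t ht
    obtain ⟨hp1, hp2, hp3, hp4, hp5⟩ := hap
    have hBB : a1 + (δ / μ) * a2 + s * T' ≤ B := by
      rw [hB]
      have : s * T' ≤ s * T := mul_le_mul_of_nonneg_left hT'T hs
      linarith
    have hx : (f t).1 ≤ B := by
      have h2 : 0 ≤ (δ/μ) * (f t).2.1 := mul_nonneg (by positivity) hp2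
      linarith
    have hy : (f t).2.1 ≤ (μ/δ) * B := by
      have h5 : (δ/μ) * (f t).2.1 ≤ B := by
        have h1 : 0 ≤ (f t).1 := hp1
        linarith
      have := mul_le_mul_of_nonneg_left h5 (le_of_lt (div_pos hμ hδ0))
      calc (f t).2.1 = (μ/δ) * ((δ/μ) * (f t).2.1) := by field_simp
        _ ≤ (μ/δ) * B := this
    rw [Real.coe_toNNReal _ (le_max_of_le_right (le_max_of_le_right ha3))]
    rw [Prod.norm_def, Prod.norm_def]
    have hn1 : ‖(f t).1‖ ≤ max B (max ((μ/δ) * B) a3) := by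
      rw [Real.norm_eq_abs, abs_of_nonneg hp1]
      exact le_max_of_le_left hx
    have hn2 : ‖(f t).2.1‖ ≤ max B (max ((μ/δ) * B) a3) := by
      rw [Real.norm_eq_abs, abs_of_nonneg hp2]
      exact le_max_of_le_right (le_max_of_le_left hy)
    have hn3 : ‖(f t).2.2‖ ≤ max B (max ((μ/δ) * B) a3) := by
      rw [Real.norm_eq_abs, abs_of_nonneg hp3]
      exact le_max_of_le_right (le_max_of_le_right hp4)
    exact max_le hn1 (max_le hn2 hn3)
  -- global solutions
  have hglobal : ∀ T : ℝ, 0 ≤ T → ∃ f, IsSol Fc x₀ f T := global_sol locFc hbb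
  have H : ∀ T : ℝ, ∃ f, IsSol Fc x₀ f (max T 0) := fun T => hglobal _ (le_max_right _ _)
  choose 𝔉 h𝔉 using H
  -- consistency by uniqueness
  have hucont' : ∀ T, ContinuousOn (𝔉 T) (Icc 0 (max T 0)) :=
    fun T => fun σ hσ => ((h𝔉 T).2 σ hσ).continuousWithinAt
  have hcons : ∀ T T' t : ℝ, 0 ≤ t → t ≤ max T 0 → t ≤ max T' 0 → 𝔉 T t = 𝔉 T' t := by
    intro T T' t ht h1 h2
    have := uniq locFc (T := min (max T 0) (max T' 0))
      ((hucont' T).mono (Icc_subset_Icc le_rfl (min_le_left _ _)))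
      (fun σ hσ => icc_mem_nhdsWithin_Ici
        ((h𝔉 T).2 σ ⟨hσ.1, hσ.2.le.trans (min_le_left _ _)⟩)
        ⟨hσ.1, lt_of_lt_of_le hσ.2 (min_le_left _ _)⟩)
      ((hucont' T').mono (Icc_subset_Icc le_rfl (min_le_right _ _)))
      (fun σ hσ => icc_mem_nhdsWithin_Ici
        ((h𝔉 T').2 σ ⟨hσ.1, hσ.2.le.trans (min_le_right _ _)⟩)
        ⟨hσ.1, lt_of_lt_of_le hσ.2 (min_le_right _ _)⟩)
      (by rw [(h𝔉 T).1, (h𝔉 T').1])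
    exact this ⟨ht, le_min h1 h2⟩
  set w : ℝ → E3 := fun t => 𝔉 t t with hw
  have hw0 : w 0 = x₀ := by
    rw [hw]; exact (h𝔉 0).1
  -- w agrees with each 𝔉 T
  have hwagree : ∀ T t : ℝ, 0 ≤ t → t ≤ max T 0 → w t = 𝔉 T t := by
    intro T t ht h1
    rw [hw]
    exact hcons t T t ht (le_max_left _ _) h1
  -- derivative of w at positive times
  have hwD : ∀ t : ℝ, 0 < t → HasDerivAt w (Fc (w t)) t := by
    intro t ht
    have hmax : max (t+1) 0 = t + 1 := max_eq_left (by linarith)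
    have hD : HasDerivWithinAt (𝔉 (t+1)) (Fc (𝔉 (t+1) t)) (Icc 0 (t+1)) t := by
      have := (h𝔉 (t+1)).2 t (by rw [hmax]; exact ⟨ht.le, by linarith⟩)
      rwa [hmax] at this
    have hDa : HasDerivAt (𝔉 (t+1)) (Fc (𝔉 (t+1) t)) t :=
      hD.hasDerivAt (Icc_mem_nhds ht (by linarith))
    have hev : w =ᶠ[𝓝 t] 𝔉 (t+1) := by
      filter_upwards [Icc_mem_nhds ht (show t < t + 1 by linarith)] with σ hσ
      exact hwagree (t+1) σ hσ.1 (by rw [hmax]; exact hσ.2)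
    have hres := hDa.congr_of_eventuallyEq hev
    have heqt : 𝔉 (t+1) t = w t := (hwagree (t+1) t ht.le (by rw [hmax]; linarith)).symm
    rwa [heqt] at hres
  -- the left-extension at 0
  obtain ⟨ε₀, hε₀, hloc₀⟩ := exists_local locFc ‖x₀‖₊
  obtain ⟨g₀, hg₀0, hg₀⟩ := hloc₀ 0 x₀ le_rfl
  rw [zero_sub, zero_add] at hg₀
  set u : ℝ → E3 := fun t => if t < 0 then g₀ t else w t with hu
  have hu_eq_w : ∀ t : ℝ, 0 ≤ t → u t = w t := fun t ht => if_neg (not_lt.2 ht)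
  have hu0 : u 0 = x₀ := by rw [hu_eq_w 0 le_rfl, hw0]
  -- w = g₀ on [0, ε₀]
  have h𝔉g : EqOn (𝔉 ε₀) g₀ (Icc 0 ε₀) := by
    have hmax : max ε₀ 0 = ε₀ := max_eq_left hε₀.le
    apply uniq locFc (T := ε₀)
    · have := hucont' ε₀; rwa [hmax] at this
    · intro σ hσ
      have := (h𝔉 ε₀).2 σ (by rw [hmax]; exact ⟨hσ.1, hσ.2.le⟩)
      rw [hmax] at this
      exact icc_mem_nhdsWithin_Ici this hσ
    · exact fun σ hσ => (hg₀ σ ⟨by linarith [hσ.1], hσ.2⟩).continuousWithinAt.mono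
        (Icc_subset_Icc (by linarith) le_rfl)
    · intro σ hσ
      exact icc_mem_nhdsWithin_Ici ((hg₀ σ ⟨by linarith [hσ.1], hσ.2.le⟩).mono
        (Icc_subset_Icc (by linarith) le_rfl)) hσ
    · rw [(h𝔉 ε₀).1, hg₀0]
  have hu_eq_g : ∀ σ ∈ Icc (-ε₀) ε₀, u σ = g₀ σ := by
    intro σ hσ
    rcases lt_or_ge σ 0 with h | h
    · exact if_pos h
    · rw [hu_eq_w σ h, hwagree ε₀ σ h (by rw [max_eq_left hε₀.le]; exact hσ.2)]
      exact h𝔉g ⟨h, hσ.2⟩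
  -- two-sided derivative at 0
  have huD0 : HasDerivAt u (Fc (u 0)) 0 := by
    have hD : HasDerivWithinAt g₀ (Fc (g₀ 0)) (Icc (-ε₀) ε₀) 0 :=
      hg₀ 0 ⟨by linarith, hε₀.le⟩
    have hDa : HasDerivAt g₀ (Fc (g₀ 0)) 0 :=
      hD.hasDerivAt (Icc_mem_nhds (by linarith) hε₀)
    have hev : u =ᶠ[𝓝 (0:ℝ)] g₀ := by
      filter_upwards [Icc_mem_nhds (show -ε₀ < (0:ℝ) by linarith) hε₀] with σ hσ
      exact hu_eq_g σ hσ
    have hres := hDa.congr_of_eventuallyEq hev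
    rwa [hg₀0, ← hu0] at hres
  have huD : ∀ t : ℝ, 0 ≤ t → HasDerivAt u (Fc (u t)) t := by
    intro t ht
    rcases eq_or_lt_of_le ht with h | h
    · rw [← h]; exact huD0
    · have hev : u =ᶠ[𝓝 t] w := by
        filter_upwards [isOpen_Ioi.mem_nhds h] with σ (hσ : 0 < σ)
        exact hu_eq_w σ hσ.le
      have hres := (hwD t h).congr_of_eventuallyEq hev
      rwa [hu_eq_w t ht]
  -- positivity of the components
  have hupos : ∀ t : ℝ, 0 ≤ t →
      0 ≤ (u t).1 ∧ 0 ≤ (u t).2.1 ∧ 0 ≤ (u t).2.2 := by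
    intro t ht
    have hmax : max t 0 = t := max_eq_left ht
    have hap := apriori hδ hη hμ hk4 hs hδημ hk1pos hk2pos hk3pos hk3lip ha1 ha2 ha3
      (le_max_right t 0) (h𝔉 t).1 (h𝔉 t).2 t (by rw [hmax]; exact ⟨ht, le_rfl⟩)
    rw [hu_eq_w t ht, hw]
    exact ⟨hap.1, hap.2.1, hap.2.2.1⟩
  -- on nonnegative times the clamped field equals the true field
  have hFcFo : ∀ t : ℝ, 0 ≤ t → Fc (u t) = Fo (u t) := by
    intro t ht
    have h1 := (hupos t ht).1
    rw [hFc, hFo]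
    simp only [Fg, id_eq]
    rw [max_eq_left h1]
  have huDo : ∀ t : ℝ, 0 ≤ t → HasDerivAt u (Fo (u t)) t := by
    intro t ht
    have := huD t ht
    rwa [hFcFo t ht] at this
  -- continuity of u on (-ε₀, ∞)
  have hucont : ∀ t ∈ Ioi (-ε₀), ContinuousAt u t := by
    intro t ht
    rcases lt_or_ge t 0 with h | h
    · have hcw : ContinuousWithinAt g₀ (Icc (-ε₀) ε₀) t :=
        (hg₀ t ⟨le_of_lt ht, by linarith⟩).continuousWithinAt
      have hca : ContinuousAt g₀ t :=
        hcw.continuousAt (Icc_mem_nhds ht (by linarith))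
      apply hca.congr
      filter_upwards [Icc_mem_nhds ht (show t < ε₀ by linarith)] with σ hσ
      exact (hu_eq_g σ hσ).symm
    · exact (huD t h).continuousAt
  -- the fourth component
  obtain ⟨K1, hK1⟩ := hk1lip
  obtain ⟨K2, hK2⟩ := hk2lip
  set G4 : ℝ → ℝ := fun σ => n * k1 ((u σ).2.1) * (u σ).1 + k2 ((u σ).2.1) * (u σ).2.2 with hG4
  have hG4ca : ∀ t ∈ Ioi (-ε₀), ContinuousAt G4 t := by
    intro t ht
    have hca := hucont t ht
    have hy : ContinuousAt (fun σ => (u σ).2.1) t :=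
      (continuous_fst.comp continuous_snd).continuousAt.comp hca
    have hx : ContinuousAt (fun σ => (u σ).1) t := continuous_fst.continuousAt.comp hca
    have hz : ContinuousAt (fun σ => (u σ).2.2) t :=
      (continuous_snd.comp continuous_snd).continuousAt.comp hca
    exact ((continuousAt_const.mul (hK1.continuous.continuousAt.comp hy)).mul hx).add
      ((hK2.continuous.continuousAt.comp hy).mul hz)
  have hG4co : ContinuousOn G4 (Ioi (-ε₀)) := fun t ht => (hG4ca t ht).continuousWithinAt
  have hu4D : ∀ t : ℝ, 0 ≤ t →
      HasDerivAt (fun τ => a4 + ∫ σ in (0:ℝ)..τ, G4 σ) (G4 t) t := by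
    intro t ht
    have htmem : t ∈ Ioi (-ε₀) := lt_of_lt_of_le (by linarith) ht
    have hsubset : uIcc (0:ℝ) t ⊆ Ioi (-ε₀) := by
      rw [uIcc_of_le ht]
      exact fun σ hσ => lt_of_lt_of_le (by linarith) hσ.1
    have hint : IntervalIntegrable G4 MeasureTheory.volume 0 t :=
      (hG4co.mono hsubset).intervalIntegrable
    have hmeas := hG4co.stronglyMeasurableAtFilter (μ := MeasureTheory.volume) isOpen_Ioi t htmem
    have := intervalIntegral.integral_hasDerivAt_right hint hmeas (hG4ca t htmem)
    exact this.const_add a4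
  refine ⟨fun t => (u t).1, fun t => (u t).2.1, fun t => (u t).2.2,
    fun t => a4 + ∫ σ in (0:ℝ)..t, G4 σ, ?_, ?_, ?_, ?_, ?_, ?_, ?_, ?_, ?_⟩
  · show (u 0).1 = a1
    rw [hu0]
  · show (u 0).2.1 = a2
    rw [hu0]
  · show (u 0).2.2 = a3
    rw [hu0]
  · show a4 + ∫ σ in (0:ℝ)..(0:ℝ), G4 σ = a4
    rw [intervalIntegral.integral_same, add_zero]
  · -- u1 equation
    intro t ht
    have h1 := hasFDerivAt_fst.comp_hasDerivAt t (huDo t ht)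
    simp only [hFo, Fg, id_eq] at h1
    exact h1
  · -- u2 equation
    intro t ht
    have h23 := hasFDerivAt_snd.comp_hasDerivAt t (huDo t ht)
    have h2 := hasFDerivAt_fst.comp_hasDerivAt t h23
    simp only [hFo, Fg, id_eq] at h2
    exact h2
  · -- u3 equation
    intro t ht
    have h23 := hasFDerivAt_snd.comp_hasDerivAt t (huDo t ht)
    have h3 := hasFDerivAt_snd.comp_hasDerivAt t h23
    simp only [hFo, Fg, id_eq] at h3
    exact h3
  · -- u4 equation
    intro t ht
    exact hu4D t ht
  · -- uniqueness
    intro v1 v2 v3 v4 hv10 hv20 hv30 hv40 hv1 hv2 hv3 hv4 t ht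
    set V : ℝ → E3 := fun σ => (v1 σ, v2 σ, v3 σ) with hV
    have hVD : ∀ σ : ℝ, 0 ≤ σ → HasDerivAt V (Fo (V σ)) σ := by
      intro σ hσ
      have hprod := (hv1 σ hσ).prodMk ((hv2 σ hσ).prodMk (hv3 σ hσ))
      exact hprod
    have hEqOn : EqOn V u (Icc 0 t) := by
      apply uniq locFo
      · exact fun σ hσ => (hVD σ hσ.1).continuousAt.continuousWithinAt
      · exact fun σ hσ => (hVD σ hσ.1).hasDerivWithinAt
      · exact fun σ hσ => (huDo σ hσ.1).continuousAt.continuousWithinAt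
      · exact fun σ hσ => (huDo σ hσ.1).hasDerivWithinAt
      · rw [hu0]
        show (v1 0, v2 0, v3 0) = x₀
        rw [hv10, hv20, hv30]
    have hVt : V t = u t := hEqOn ⟨ht, le_rfl⟩
    have h1 : v1 t = (u t).1 := congrArg Prod.fst hVt
    have h2 : v2 t = (u t).2.1 := congrArg (fun p => p.2.1) hVt
    have h3 : v3 t = (u t).2.2 := congrArg (fun p => p.2.2) hVt
    refine ⟨h1, h2, h3, ?_⟩
    have hder0 : ∀ σ ∈ Ico 0 t,
        HasDerivWithinAt (fun τ => v4 τ - (a4 + ∫ ρ in (0:ℝ)..τ, G4 ρ)) 0 (Ici σ) σ := by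
      intro σ hσ
      have hVσ := hEqOn ⟨hσ.1, hσ.2.le⟩
      have e1 : v1 σ = (u σ).1 := congrArg Prod.fst hVσ
      have e2 : v2 σ = (u σ).2.1 := congrArg (fun p => p.2.1) hVσ
      have e3 : v3 σ = (u σ).2.2 := congrArg (fun p => p.2.2) hVσ
      have hz : HasDerivWithinAt (fun τ => v4 τ - (a4 + ∫ ρ in (0:ℝ)..τ, G4 ρ))
          (n * k1 (v2 σ) * v1 σ + k2 (v2 σ) * v3 σ - G4 σ) (Ici σ) σ :=
        ((hv4 σ hσ.1).sub (hu4D σ hσ.1)).hasDerivWithinAt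
      have hzero : n * k1 (v2 σ) * v1 σ + k2 (v2 σ) * v3 σ - G4 σ = 0 := by
        rw [e1, e2, e3, hG4]
        simp
      rwa [hzero] at hz
    have hcont4 : ContinuousOn (fun τ => v4 τ - (a4 + ∫ ρ in (0:ℝ)..τ, G4 ρ)) (Icc 0 t) :=
      fun σ hσ => (((hv4 σ hσ.1).continuousAt).sub ((hu4D σ hσ.1).continuousAt)).continuousWithinAt
    have hconst := constant_of_has_deriv_right_zero hcont4 hder0 t ⟨ht, le_rfl⟩
    simp only [hv40, intervalIntegral.integral_same, add_zero, sub_self] at hconst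
    show v4 t = a4 + ∫ σ in (0:ℝ)..t, G4 σ
    linarith [hconst]
end

section
/- Let U_1 = (k_4/(μ k_3(0)))^{1/δ}. If s ≤ k_1(0) U_1, the only equilibrium of the reduced 3-dimensional system in the nonnegative orthant is (s/k_1(0), 0, 0); if s > k_1(0) U_1 and δ - ημ > 0, there exists exactly one additional equilibrium (U_1, u_2*, 0) with u_2* > 0 solving 0 = -k_1(u_2*) U_1 - (k_4/μ)(δ - ημ) u_2* + s. -/
set_option maxHeartbeats 1600000 in
/-- With U_1 = (k_4/(μ k_3(0)))^{1/δ}: if s ≤ k_1(0) U_1 the only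
nonnegative equilibrium of the reduced system is (s/k_1(0), 0, 0); if s > k_1(0) U_1
(and δ > ημ) there is exactly one additional equilibrium (U_1, u_2*, 0) with
u_2* > 0 solving 0 = -k_1(u_2*) U_1 - (k_4/μ)(δ - ημ) u_2* + s. -/
theorem stmt_8
    (δ η μ k4 s : ℝ)
    (hδ : 1 ≤ δ) (hη : 0 < η) (hμ : 0 < μ) (hk4 : 0 < k4) (hs : 0 ≤ s)
    (hδημ : η * μ < δ)
    (k1 k2 k3 : ℝ → ℝ)
    (hk1pos : ∀ x, 0 < k1 x) (hk2pos : ∀ x, 0 < k2 x) (hk3pos : ∀ x, 0 < k3 x)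
    (hk1lip : ∃ K, LipschitzWith K k1) (hk3lip : ∃ K, LipschitzWith K k3)
    (hk1mono : StrictMono k1) (hk3mono : StrictMono k3)
    (U1 : ℝ) (hU1 : U1 = (k4 / (μ * k3 0)) ^ (1/δ))
    (IsEquilibrium : ℝ → ℝ → ℝ → Prop)
    (hEq : ∀ u1 u2 u3, IsEquilibrium u1 u2 u3 ↔
      (-(k1 u2) * u1 - δ * k3 u3 * u2 * u1 ^ δ + η * k4 * u2 + s = 0 ∧
       μ * k3 u3 * u2 * u1 ^ δ - k4 * u2 = 0 ∧
       -(k2 u2) * u3 = 0)) :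
    (s ≤ k1 0 * U1 →
      ∀ u1 u2 u3 : ℝ, 0 ≤ u1 → 0 ≤ u2 → 0 ≤ u3 → IsEquilibrium u1 u2 u3 →
        u1 = s / k1 0 ∧ u2 = 0 ∧ u3 = 0) ∧
    (k1 0 * U1 < s →
      ∃! v : ℝ, 0 < v ∧ 0 = -(k1 v) * U1 - (k4 / μ) * (δ - η * μ) * v + s ∧
        IsEquilibrium U1 v 0) := by
  have hδ0 : (0:ℝ) < δ := lt_of_lt_of_le one_pos hδ
  have hbase : (0:ℝ) < k4 / (μ * k3 0) := div_pos hk4 (mul_pos hμ (hk3pos 0))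
  have hU1pos : 0 < U1 := by rw [hU1]; exact Real.rpow_pos_of_pos hbase _
  have hU1δ : U1 ^ δ = k4 / (μ * k3 0) := by
    rw [hU1, ← Real.rpow_mul hbase.le, one_div, inv_mul_cancel₀ (ne_of_gt hδ0),
      Real.rpow_one]
  have hk30 : k3 0 ≠ 0 := (hk3pos 0).ne'
  have hc : 0 < k4 / μ * (δ - η * μ) :=
    mul_pos (div_pos hk4 hμ) (by linarith)
  have hsub : k3 0 * U1 ^ δ = k4 / μ := by
    rw [hU1δ]; field_simp
  have hημ : η * k4 = k4 / μ * (η * μ) := by field_simp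
  constructor
  · intro hsle u1 u2 u3 h1 h2 h3 heq
    rw [hEq] at heq
    obtain ⟨e1, e2, e3⟩ := heq
    have hu3 : u3 = 0 := by
      rcases mul_eq_zero.1 e3 with h | h
      · exact absurd h (by have := hk2pos u2; intro hh; nlinarith)
      · exact h
    subst hu3
    rcases eq_or_lt_of_le h2 with hu2 | hu2pos
    · -- u2 = 0
      have hu2 : u2 = 0 := hu2.symm
      subst hu2
      have hk10 : k1 0 ≠ 0 := (hk1pos 0).ne'
      refine ⟨?_, rfl, rfl⟩
      have he : -(k1 0) * u1 + s = 0 := by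
        have : δ * k3 0 * 0 * u1 ^ δ = 0 := by ring
        have : η * k4 * 0 = 0 := by ring
        linarith [e1, show δ * k3 0 * 0 * u1 ^ δ = 0 by ring,
          show η * k4 * (0:ℝ) = 0 by ring]
      field_simp
      linarith
    · -- u2 > 0 : contradiction
      exfalso
      have e2' : u2 * (μ * k3 0 * u1 ^ δ - k4) = 0 := by ring_nf; ring_nf at e2; linarith
      rcases mul_eq_zero.1 e2' with h | hfac
      · exact absurd h hu2pos.ne'
      have hu1δ : u1 ^ δ = U1 ^ δ := by
        rw [hU1δ]; field_simp; linarith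
      have hu1 : u1 = U1 := by
        have h1' : (u1 ^ δ) ^ (1/δ) = (U1 ^ δ) ^ (1/δ) := by rw [hu1δ]
        rwa [← Real.rpow_mul h1, ← Real.rpow_mul hU1pos.le,
          mul_one_div, div_self (ne_of_gt hδ0), Real.rpow_one, Real.rpow_one] at h1'
      rw [hu1] at e1
      have hk1gt : k1 0 < k1 u2 := hk1mono hu2pos
      have h4 : δ * k3 0 * u2 * U1 ^ δ = δ * (k4/μ) * u2 := by
        rw [show δ * k3 0 * u2 * U1 ^ δ = δ * (k3 0 * U1 ^ δ) * u2 by ring, hsub]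
      -- e1 : -(k1 u2) * U1 - δ * k3 0 * u2 * U1^δ + η*k4*u2 + s = 0
      have hkey : s = k1 u2 * U1 + (k4 / μ * (δ - η * μ)) * u2 := by nlinarith [e1, h4]
      nlinarith [mul_pos hc hu2pos, mul_lt_mul_of_pos_right hk1gt hU1pos]
  · intro hlt
    obtain ⟨K, hK⟩ := hk1lip
    have hfc : Continuous (fun v => s - k1 v * U1 - (k4 / μ * (δ - η * μ)) * v) :=
      (continuous_const.sub ((hK.continuous).mul continuous_const)).sub
        (continuous_const.mul continuous_id)
    have hf0 : 0 < s - k1 0 * U1 - (k4 / μ * (δ - η * μ)) * 0 := by nlinarith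
    have hBpos : (0:ℝ) < (s - k1 0 * U1) / (k4 / μ * (δ - η * μ)) + 1 := by
      have h1 : 0 < (s - k1 0 * U1) / (k4 / μ * (δ - η * μ)) := div_pos (by linarith) hc
      linarith
    have hcB : (k4 / μ * (δ - η * μ)) * ((s - k1 0 * U1) / (k4 / μ * (δ - η * μ)) + 1)
        = (s - k1 0 * U1) + (k4 / μ * (δ - η * μ)) := by
      rw [mul_add, mul_one, mul_comm (k4 / μ * (δ - η * μ)), div_mul_cancel₀ _ hc.ne']
    have hfB : s - k1 ((s - k1 0 * U1) / (k4 / μ * (δ - η * μ)) + 1) * U1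
        - (k4 / μ * (δ - η * μ)) * ((s - k1 0 * U1) / (k4 / μ * (δ - η * μ)) + 1) < 0 := by
      have hk1B : k1 0 ≤ k1 ((s - k1 0 * U1) / (k4 / μ * (δ - η * μ)) + 1) :=
        (hk1mono.le_iff_le).2 hBpos.le
      have h2 := mul_le_mul_of_nonneg_right hk1B hU1pos.le
      linarith
    have hiv : (0:ℝ) ∈ (fun v => s - k1 v * U1 - (k4 / μ * (δ - η * μ)) * v) ''
        Set.Icc 0 ((s - k1 0 * U1) / (k4 / μ * (δ - η * μ)) + 1) :=
      intermediate_value_Icc' hBpos.le hfc.continuousOn ⟨hfB.le, hf0.le⟩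
    obtain ⟨v, hvmem, hfv⟩ := hiv
    simp only at hfv
    have hvpos : 0 < v := by
      rcases eq_or_lt_of_le hvmem.1 with h | h
      · exfalso; rw [← h] at hfv; linarith
      · exact h
    have hk1v : 0 = -(k1 v) * U1 - (k4 / μ * (δ - η * μ)) * v + s := by linarith
    have hequib : ∀ w, (0 = -(k1 w) * U1 - (k4 / μ * (δ - η * μ)) * w + s) →
        IsEquilibrium U1 w 0 := by
      intro w hwE
      rw [hEq]
      refine ⟨?_, ?_, by ring⟩
      · have h4 : δ * k3 0 * w * U1 ^ δ = δ * (k4/μ) * w := by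
          rw [show δ * k3 0 * w * U1 ^ δ = δ * (k3 0 * U1 ^ δ) * w by ring, hsub]
        have hexp : (k4 / μ * (δ - η * μ)) * w = δ * (k4/μ) * w - η * k4 * w := by
          rw [hημ]; ring
        rw [h4]
        linarith
      · have h5 : μ * k3 0 * w * U1 ^ δ = μ * (k3 0 * U1 ^ δ) * w := by ring
        have h6 : μ * (k4/μ) = k4 := by field_simp
        rw [h5, hsub, h6]
        ring
    refine ⟨v, ⟨hvpos, hk1v, hequib v hk1v⟩, ?_⟩
    rintro y ⟨hy, hyE, -⟩
    by_contra hne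
    rcases lt_or_gt_of_ne hne with h | h
    · have h1 := mul_lt_mul_of_pos_right (hk1mono h) hU1pos
      have h2 := mul_lt_mul_of_pos_left h hc
      linarith
    · have h1 := mul_lt_mul_of_pos_right (hk1mono h) hU1pos
      have h2 := mul_lt_mul_of_pos_left h hc
      linarith
end

section
/- The Jacobian of the reduced system at the equilibrium (s/k_1(0), 0, 0) is upper triangular with diagonal entries -k_1(0), μ k_3(0) (s/k_1(0))^δ - k_4, and -k_2(0); hence this equilibrium is asymptotically stable if s < k_1(0) (k_4/(μ k_3(0)))^{1/δ} and unstable if s > k_1(0) (k_4/(μ k_3(0)))^{1/δ}. -/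
/-- The Jacobian of the reduced system at the equilibrium
(s/k_1(0), 0, 0) is upper triangular with diagonal entries -k_1(0),
μ k_3(0)(s/k_1(0))^δ - k_4 and -k_2(0); hence the equilibrium is asymptotically
stable (all eigenvalues negative) if s < k_1(0)(k_4/(μ k_3(0)))^{1/δ} and
unstable (a positive eigenvalue exists) if s > k_1(0)(k_4/(μ k_3(0)))^{1/δ}. -/
theorem stmt_10
    (δ η μ k4 s : ℝ)
    (hδ : 1 ≤ δ) (hη : 0 < η) (hμ : 0 < μ) (hk4 : 0 < k4) (hs : 0 < s)
    (k1 k2 k3 k1' k2' k3' : ℝ → ℝ)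
    (hk1pos : ∀ x, 0 < k1 x) (hk2pos : ∀ x, 0 < k2 x) (hk3pos : ∀ x, 0 < k3 x)
    (hk1' : ∀ x, HasDerivAt k1 (k1' x) x) (hk2' : ∀ x, HasDerivAt k2 (k2' x) x)
    (hk3' : ∀ x, HasDerivAt k3 (k3' x) x)
    (hk1mono : StrictMono k1) (hk2mono : StrictMono k2) (hk3mono : StrictMono k3)
    (G : (Fin 3 → ℝ) → (Fin 3 → ℝ))
    (hG : ∀ x, G x = ![-(k1 (x 1)) * x 0 - δ * k3 (x 2) * x 1 * (x 0) ^ δ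
                        + η * k4 * x 1 + s,
                      μ * k3 (x 2) * x 1 * (x 0) ^ δ - k4 * x 1,
                      -(k2 (x 1)) * x 2])
    (p : Fin 3 → ℝ) (hp : p = ![s / k1 0, 0, 0])
    (J : Matrix (Fin 3) (Fin 3) ℝ)
    (hJ : ∀ i j, J i j = fderiv ℝ (fun x => G x i) p (Pi.single j 1)) :
    (∀ i j : Fin 3, (j : ℕ) < (i : ℕ) → J i j = 0) ∧
    J 0 0 = -(k1 0) ∧
    J 1 1 = μ * k3 0 * (s / k1 0) ^ δ - k4 ∧
    J 2 2 = -(k2 0) ∧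
    (s < k1 0 * (k4 / (μ * k3 0)) ^ (1/δ) → ∀ i, J i i < 0) ∧
    (k1 0 * (k4 / (μ * k3 0)) ^ (1/δ) < s → ∃ i, 0 < J i i) := by
  subst hp
  have ha : 0 < s / k1 0 := div_pos hs (hk1pos 0)
  set q : Fin 3 → ℝ := ![s / k1 0, 0, 0] with hq
  have hq0 : q 0 = s / k1 0 := rfl
  have hq1 : q 1 = 0 := rfl
  have hq2 : q 2 = 0 := rfl
  have hproj : ∀ i : Fin 3, HasFDerivAt (fun x : Fin 3 → ℝ => x i)
      (ContinuousLinearMap.proj i : (Fin 3 → ℝ) →L[ℝ] ℝ) q :=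
    fun i => hasFDerivAt_apply i q
  have hk1c : HasFDerivAt (fun x : Fin 3 → ℝ => k1 (x 1))
      (k1' (q 1) • (ContinuousLinearMap.proj 1 : (Fin 3 → ℝ) →L[ℝ] ℝ)) q :=
    (hk1' (q 1)).comp_hasFDerivAt q (hproj 1)
  have hk2c : HasFDerivAt (fun x : Fin 3 → ℝ => k2 (x 1))
      (k2' (q 1) • (ContinuousLinearMap.proj 1 : (Fin 3 → ℝ) →L[ℝ] ℝ)) q :=
    (hk2' (q 1)).comp_hasFDerivAt q (hproj 1)
  have hk3c : HasFDerivAt (fun x : Fin 3 → ℝ => k3 (x 2))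
      (k3' (q 2) • (ContinuousLinearMap.proj 2 : (Fin 3 → ℝ) →L[ℝ] ℝ)) q :=
    (hk3' (q 2)).comp_hasFDerivAt q (hproj 2)
  have hrpow : HasFDerivAt (fun x : Fin 3 → ℝ => (x 0) ^ δ)
      ((δ * (q 0) ^ (δ - 1)) • (ContinuousLinearMap.proj 0 : (Fin 3 → ℝ) →L[ℝ] ℝ)) q :=
    (Real.hasDerivAt_rpow_const (Or.inl (by rw [hq0]; exact ne_of_gt ha))).comp_hasFDerivAt
      q (hproj 0)
  -- component 0
  have hF0 := (((hk1c.neg.mul (hproj 0)).sub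
      (((hk3c.const_mul δ).mul (hproj 1)).mul hrpow)).add
      ((hproj 1).const_mul (η * k4))).add_const s
  have e0 : (fun x : Fin 3 → ℝ => G x 0)
      = (fun x : Fin 3 → ℝ => -(k1 (x 1)) * x 0 - δ * k3 (x 2) * x 1 * (x 0) ^ δ
          + η * k4 * x 1 + s) := by
    funext x; rw [hG]; rfl
  -- component 1
  have hF1 := (((hk3c.const_mul μ).mul (hproj 1)).mul hrpow).sub ((hproj 1).const_mul k4)
  have e1 : (fun x : Fin 3 → ℝ => G x 1)
      = (fun x : Fin 3 → ℝ => μ * k3 (x 2) * x 1 * (x 0) ^ δ - k4 * x 1) := by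
    funext x; rw [hG]; rfl
  -- component 2
  have hF2 := (hk2c.neg).mul (hproj 2)
  have e2 : (fun x : Fin 3 → ℝ => G x 2)
      = (fun x : Fin 3 → ℝ => -(k2 (x 1)) * x 2) := by
    funext x; rw [hG]; rfl
  -- explicit entries
  have hd0 : fderiv ℝ (fun x : Fin 3 → ℝ => -(k1 (x 1)) * x 0 - δ * k3 (x 2) * x 1 * (x 0) ^ δ
          + η * k4 * x 1 + s) q = _ := hF0.fderiv
  have hd1 : fderiv ℝ (fun x : Fin 3 → ℝ => μ * k3 (x 2) * x 1 * (x 0) ^ δ - k4 * x 1) q = _ :=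
    hF1.fderiv
  have hd2 : fderiv ℝ (fun x : Fin 3 → ℝ => -(k2 (x 1)) * x 2) q = _ := hF2.fderiv
  have h00 : J 0 0 = -(k1 0) := by
    rw [hJ, e0, hd0]
    simp [hq0, hq1, hq2, Pi.single_apply]
  have h01 : True := trivial
  have h10 : J 1 0 = 0 := by
    rw [hJ, e1, hd1]
    simp [hq0, hq1, hq2, Pi.single_apply]
  have h11 : J 1 1 = μ * k3 0 * (s / k1 0) ^ δ - k4 := by
    rw [hJ, e1, hd1]
    simp [hq0, hq1, hq2, Pi.single_apply]
    ring
  have h20 : J 2 0 = 0 := by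
    rw [hJ, e2, hd2]
    simp [hq0, hq1, hq2, Pi.single_apply]
  have h21 : J 2 1 = 0 := by
    rw [hJ, e2, hd2]
    simp [hq0, hq1, hq2, Pi.single_apply]
  have h22 : J 2 2 = -(k2 0) := by
    rw [hJ, e2, hd2]
    simp [hq0, hq1, hq2, Pi.single_apply]
  have δpos : 0 < δ := lt_of_lt_of_le one_pos hδ
  have δne : δ ≠ 0 := ne_of_gt δpos
  clear hd0 hd1 hd2 hF0 hF1 hF2 e0 e1 e2 hk1c hk2c hk3c hrpow hproj hJ hG
  have hmk3 : 0 < μ * k3 0 := mul_pos hμ (hk3pos 0)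
  have hc : 0 < k4 / (μ * k3 0) := div_pos hk4 hmk3
  have hcd : ((k4 / (μ * k3 0)) ^ (1/δ)) ^ δ = k4 / (μ * k3 0) := by
    rw [← Real.rpow_mul hc.le, one_div_mul_cancel δne, Real.rpow_one]
  refine ⟨?_, h00, h11, h22, ?_, ?_⟩
  · intro i j hij
    fin_cases i <;> fin_cases j <;>
      first
      | exact h10
      | exact h20
      | exact h21
      | exact absurd hij (by decide)
  · intro hlt i
    have h1 : s / k1 0 < (k4 / (μ * k3 0)) ^ (1/δ) :=
      (div_lt_iff₀ (hk1pos 0)).mpr (by linarith [mul_comm (k1 0) ((k4 / (μ * k3 0)) ^ (1/δ))])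
    have h2 : (s / k1 0) ^ δ < k4 / (μ * k3 0) := by
      calc (s / k1 0) ^ δ < ((k4 / (μ * k3 0)) ^ (1/δ)) ^ δ :=
            Real.rpow_lt_rpow ha.le h1 δpos
        _ = k4 / (μ * k3 0) := hcd
    have h3 : μ * k3 0 * (s / k1 0) ^ δ < k4 := by
      have := (lt_div_iff₀ hmk3).mp h2
      linarith
    fin_cases i
    · show J 0 0 < 0
      rw [h00]; simpa using hk1pos 0
    · show J 1 1 < 0
      rw [h11]; linarith
    · show J 2 2 < 0
      rw [h22]; simpa using hk2pos 0
  · intro hlt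
    refine ⟨1, ?_⟩
    have h1 : (k4 / (μ * k3 0)) ^ (1/δ) < s / k1 0 :=
      (lt_div_iff₀ (hk1pos 0)).mpr (by linarith [mul_comm (k1 0) ((k4 / (μ * k3 0)) ^ (1/δ))])
    have h2 : k4 / (μ * k3 0) < (s / k1 0) ^ δ := by
      calc k4 / (μ * k3 0) = ((k4 / (μ * k3 0)) ^ (1/δ)) ^ δ := hcd.symm
        _ < (s / k1 0) ^ δ := Real.rpow_lt_rpow (Real.rpow_nonneg hc.le _) h1 δpos
    have h3 : k4 < μ * k3 0 * (s / k1 0) ^ δ := by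
      have := (div_lt_iff₀ hmk3).mp h2
      linarith
    rw [h11]; linarith
end

section
/- For the equilibrium (U_1, u_2*, 0) with u_2* > 0, the Jacobian matrix of the reduced system has block structure with a 2×2 upper-left block [[A_1, A_2],[A_3, 0]] where A_1 = -k_1(u_2*) - δ² k_3(0) u_2* U_1^{δ-1} < 0, A_2 = -k_1'(u_2*) U_1 - (k_4/μ)(δ - ημ) < 0, A_3 = δ μ k_3(0) u_2* U_1^{δ-1} > 0, and third eigenvalue -k_2(u_2*) < 0; hence all eigenvalues have negative real part and the equilibrium is asymptotically stable. -/
section helpers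
lemma line_hasDerivAt (p : Fin 3 → ℝ) (j : Fin 3) (t : ℝ) :
    HasDerivAt (fun s => Function.update p j s) (Pi.single j 1) t := by
  rw [hasDerivAt_pi]
  intro i
  by_cases h : i = j
  · subst h
    simp only [Function.update_self, Pi.single_eq_same]
    exact hasDerivAt_id t
  · simp only [Function.update_of_ne h, Pi.single_eq_of_ne h]
    exact hasDerivAt_const t _

lemma my_fderiv_single {f : (Fin 3 → ℝ) → ℝ} {p : Fin 3 → ℝ} {j : Fin 3} {D : ℝ}
    (hdiff : DifferentiableAt ℝ f p)
    (hD : HasDerivAt (fun t => f (Function.update p j t)) D (p j)) :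
    fderiv ℝ f p (Pi.single j 1) = D := by
  have hline := line_hasDerivAt p j (p j)
  have hc : HasDerivAt (fun t => f (Function.update p j t))
      (fderiv ℝ f p (Pi.single j 1)) (p j) := by
    have h0 : HasFDerivAt f (fderiv ℝ f p) (Function.update p j (p j)) := by
      rw [Function.update_eq_self]; exact hdiff.hasFDerivAt
    exact h0.comp_hasDerivAt (p j) hline
  exact hc.unique hD

lemma quad_neg_re (a b : ℝ) (ha : 0 < a) (hb : 0 < b) (lam : ℂ)
    (h : lam ^ 2 + (a : ℂ) * lam + (b : ℂ) = 0) : lam.re < 0 := by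
  by_contra hx
  push_neg at hx
  set x := lam.re with hxdef
  set y := lam.im with hydef
  have h1 := congrArg Complex.re h
  have h2 := congrArg Complex.im h
  simp only [pow_two, Complex.add_re, Complex.add_im, Complex.mul_re, Complex.mul_im,
    Complex.ofReal_re, Complex.ofReal_im, Complex.zero_re, Complex.zero_im] at h1 h2
  have hy : y = 0 := by
    rcases mul_eq_zero.1 (show y * (2 * x + a) = 0 by nlinarith) with h | h
    · exact h
    · nlinarith
  nlinarith [sq_nonneg x]
end helpers

/-- At the equilibrium (U_1, u_2*, 0) with u_2* > 0, the Jacobian of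
the reduced system has the block structure with 2×2 upper-left block
[[A₁, A₂],[A₃, 0]], A₁ < 0, A₂ < 0, A₃ > 0, third eigenvalue -k_2(u_2*) < 0;
hence all eigenvalues have negative real part (asymptotic stability). -/
theorem stmt_12
    (δ η μ k4 s : ℝ)
    (hδ : 1 ≤ δ) (hη : 0 < η) (hμ : 0 < μ) (hk4 : 0 < k4)
    (hημ : 0 ≤ η * μ) (hδημ : η * μ < δ)
    (k1 k2 k3 k1' k2' k3' : ℝ → ℝ)
    (hk1pos : ∀ x, 0 < k1 x) (hk2pos : ∀ x, 0 < k2 x) (hk3pos : ∀ x, 0 < k3 x)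
    (hk1' : ∀ x, HasDerivAt k1 (k1' x) x) (hk2' : ∀ x, HasDerivAt k2 (k2' x) x)
    (hk3' : ∀ x, HasDerivAt k3 (k3' x) x)
    (hk1'pos : ∀ x, 0 < k1' x) (hk2'pos : ∀ x, 0 < k2' x) (hk3'pos : ∀ x, 0 < k3' x)
    (U1 : ℝ) (hU1 : U1 = (k4 / (μ * k3 0)) ^ (1/δ))
    (hs : k1 0 * U1 < s)
    (u2s : ℝ) (hu2s : 0 < u2s)
    (hroot : 0 = -(k1 u2s) * U1 - (k4 / μ) * (δ - η * μ) * u2s + s)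
    (G : (Fin 3 → ℝ) → (Fin 3 → ℝ))
    (hG : ∀ x, G x = ![-(k1 (x 1)) * x 0 - δ * k3 (x 2) * x 1 * (x 0) ^ δ
                        + η * k4 * x 1 + s,
                      μ * k3 (x 2) * x 1 * (x 0) ^ δ - k4 * x 1,
                      -(k2 (x 1)) * x 2])
    (p : Fin 3 → ℝ) (hp : p = ![U1, u2s, 0])
    (J : Matrix (Fin 3) (Fin 3) ℝ)
    (hJ : ∀ i j, J i j = fderiv ℝ (fun x => G x i) p (Pi.single j 1)) :
    J 0 0 = -(k1 u2s) - δ ^ 2 * k3 0 * u2s * U1 ^ (δ - 1) ∧ J 0 0 < 0 ∧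
    J 0 1 = -(k1' u2s) * U1 - (k4 / μ) * (δ - η * μ) ∧ J 0 1 < 0 ∧
    J 1 0 = δ * μ * k3 0 * u2s * U1 ^ (δ - 1) ∧ 0 < J 1 0 ∧
    J 1 1 = 0 ∧ J 2 0 = 0 ∧ J 2 1 = 0 ∧
    J 2 2 = -(k2 u2s) ∧ J 2 2 < 0 ∧
    (∀ lam : ℂ, lam ∈ spectrum ℂ (J.map Complex.ofReal) → lam.re < 0) := by
  subst hp
  have hδ0 : (0:ℝ) < δ := lt_of_lt_of_le one_pos hδ
  have hδne : δ ≠ 0 := ne_of_gt hδ0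
  have hbase : (0:ℝ) < k4 / (μ * k3 0) := div_pos hk4 (mul_pos hμ (hk3pos 0))
  have hU1pos : 0 < U1 := by rw [hU1]; exact Real.rpow_pos_of_pos hbase _
  have hU1ne : U1 ≠ 0 := ne_of_gt hU1pos
  have hUδ : k3 0 * U1 ^ δ = k4 / μ := by
    rw [hU1, ← Real.rpow_mul hbase.le, one_div_mul_cancel hδne, Real.rpow_one]
    field_simp
    exact div_self (hk3pos 0).ne'
  have hUδ' : μ * (k3 0 * U1 ^ δ) = k4 := by
    rw [hUδ]; field_simp
  have key2 : δ * k3 0 * U1 ^ δ - η * k4 = (k4 / μ) * (δ - η * μ) := by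
    rw [div_mul_eq_mul_div, eq_div_iff hμ.ne']
    linear_combination δ * hUδ'
  set pt : Fin 3 → ℝ := ![U1, u2s, 0] with hpt
  have hpt0 : pt 0 = U1 := rfl
  have hpt1 : pt 1 = u2s := rfl
  have hpt2 : pt 2 = (0:ℝ) := rfl
  -- the three component functions
  set f0 : (Fin 3 → ℝ) → ℝ := fun x => -(k1 (x 1)) * x 0
      - δ * k3 (x 2) * x 1 * (x 0) ^ δ + η * k4 * x 1 + s with hf0def
  set f1 : (Fin 3 → ℝ) → ℝ := fun x => μ * k3 (x 2) * x 1 * (x 0) ^ δ - k4 * x 1 with hf1def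
  set f2 : (Fin 3 → ℝ) → ℝ := fun x => -(k2 (x 1)) * x 2 with hf2def
  have hG0 : (fun x => G x 0) = f0 := funext fun x => by rw [hG]; rfl
  have hG1 : (fun x => G x 1) = f1 := funext fun x => by rw [hG]; rfl
  have hG2 : (fun x => G x 2) = f2 := funext fun x => by rw [hG]; rfl
  -- differentiability at pt
  have hproj : ∀ i : Fin 3, DifferentiableAt ℝ (fun x : Fin 3 → ℝ => x i) pt :=
    fun i => (ContinuousLinearMap.proj (R := ℝ) (φ := fun _ : Fin 3 => ℝ) i).differentiableAt
  have hrpow : DifferentiableAt ℝ (fun x : Fin 3 → ℝ => (x 0) ^ δ) pt :=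
    DifferentiableAt.comp (g := fun t : ℝ => t ^ δ) pt
      ((Real.hasDerivAt_rpow_const (p := δ) (Or.inl hU1ne)).differentiableAt) (hproj 0)
  have hk1c : DifferentiableAt ℝ (fun x : Fin 3 → ℝ => k1 (x 1)) pt :=
    DifferentiableAt.comp pt (hk1' (pt 1)).differentiableAt (hproj 1)
  have hk2c : DifferentiableAt ℝ (fun x : Fin 3 → ℝ => k2 (x 1)) pt :=
    DifferentiableAt.comp pt (hk2' (pt 1)).differentiableAt (hproj 1)
  have hk3c : DifferentiableAt ℝ (fun x : Fin 3 → ℝ => k3 (x 2)) pt :=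
    DifferentiableAt.comp pt (hk3' (pt 2)).differentiableAt (hproj 2)
  have hf0 : DifferentiableAt ℝ f0 pt := by
    apply DifferentiableAt.add_const
    apply DifferentiableAt.add
    · exact (hk1c.neg.mul (hproj 0)).sub
        ((((differentiableAt_const δ).mul hk3c).mul (hproj 1)).mul hrpow)
    · exact (differentiableAt_const (η * k4)).mul (hproj 1)
  have hf1 : DifferentiableAt ℝ f1 pt :=
    ((((differentiableAt_const μ).mul hk3c).mul (hproj 1)).mul hrpow).sub
      ((differentiableAt_const k4).mul (hproj 1))
  have hf2 : DifferentiableAt ℝ f2 pt := hk2c.neg.mul (hproj 2)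
  -- update lemmas
  have hu0 : ∀ t : ℝ, Function.update pt 0 t = ![t, u2s, 0] := by
    intro t; funext i; fin_cases i <;> simp [Function.update, hpt]
  have hu1 : ∀ t : ℝ, Function.update pt 1 t = ![U1, t, 0] := by
    intro t; funext i; fin_cases i <;> simp [Function.update, hpt]
  have hu2 : ∀ t : ℝ, Function.update pt 2 t = ![U1, u2s, t] := by
    intro t; funext i; fin_cases i <;> simp [Function.update, hpt]
  have hr : HasDerivAt (fun t : ℝ => t ^ δ) (δ * U1 ^ (δ - 1)) U1 :=
    Real.hasDerivAt_rpow_const (Or.inl hU1ne)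
  -- J 0 0
  have hJ00 : J 0 0 = -(k1 u2s) - δ ^ 2 * k3 0 * u2s * U1 ^ (δ - 1) := by
    rw [hJ, hG0]
    apply my_fderiv_single hf0
    show HasDerivAt _ _ U1
    have he : (fun t => f0 (Function.update pt 0 t))
        = fun t => -(k1 u2s) * t - δ * k3 0 * u2s * t ^ δ + η * k4 * u2s + s := by
      funext t; rw [hu0 t]; rfl
    rw [he]
    have h := ((((hasDerivAt_id U1).const_mul (-(k1 u2s))).sub
        (hr.const_mul (δ * k3 0 * u2s))).add_const (η * k4 * u2s)).add_const s
    refine h.congr_deriv (Eq.symm ?_)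
    ring
  -- J 0 1
  have hJ01 : J 0 1 = -(k1' u2s) * U1 - (k4 / μ) * (δ - η * μ) := by
    rw [hJ, hG0]
    apply my_fderiv_single hf0
    show HasDerivAt _ _ u2s
    have he : (fun t => f0 (Function.update pt 1 t))
        = fun t => -(k1 t) * U1 - δ * k3 0 * t * U1 ^ δ + η * k4 * t + s := by
      funext t; rw [hu1 t]; rfl
    rw [he]
    have h := ((((hk1' u2s).neg.mul_const U1).sub
        (((hasDerivAt_id u2s).const_mul (δ * k3 0)).mul_const (U1 ^ δ))).add
        ((hasDerivAt_id u2s).const_mul (η * k4))).add_const s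
    refine h.congr_deriv (Eq.symm ?_)
    rw [← key2]; ring
  -- J 1 0
  have hJ10 : J 1 0 = δ * μ * k3 0 * u2s * U1 ^ (δ - 1) := by
    rw [hJ, hG1]
    apply my_fderiv_single hf1
    show HasDerivAt _ _ U1
    have he : (fun t => f1 (Function.update pt 0 t))
        = fun t => μ * k3 0 * u2s * t ^ δ - k4 * u2s := by
      funext t; rw [hu0 t]; rfl
    rw [he]
    have h := (hr.const_mul (μ * k3 0 * u2s)).sub_const (k4 * u2s)
    refine h.congr_deriv (Eq.symm ?_)
    ring
  -- J 1 1
  have hJ11 : J 1 1 = 0 := by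
    rw [hJ, hG1]
    apply my_fderiv_single hf1
    show HasDerivAt _ _ u2s
    have he : (fun t => f1 (Function.update pt 1 t))
        = fun t => μ * k3 0 * t * U1 ^ δ - k4 * t := by
      funext t; rw [hu1 t]; rfl
    rw [he]
    have h := (((hasDerivAt_id u2s).const_mul (μ * k3 0)).mul_const (U1 ^ δ)).sub
        ((hasDerivAt_id u2s).const_mul k4)
    refine h.congr_deriv (Eq.symm ?_)
    linear_combination -hUδ'
  -- J 2 0
  have hJ20 : J 2 0 = 0 := by
    rw [hJ, hG2]
    apply my_fderiv_single hf2
    show HasDerivAt _ _ U1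
    have he : (fun t => f2 (Function.update pt 0 t)) = fun _ => -(k2 u2s) * 0 := by
      funext t; rw [hu0 t]; rfl
    rw [he]
    simpa using hasDerivAt_const U1 (-(k2 u2s) * 0)
  -- J 2 1
  have hJ21 : J 2 1 = 0 := by
    rw [hJ, hG2]
    apply my_fderiv_single hf2
    show HasDerivAt _ _ u2s
    have he : (fun t => f2 (Function.update pt 1 t)) = fun t => -(k2 t) * 0 := by
      funext t; rw [hu1 t]; rfl
    rw [he]
    have h := (hk2' u2s).neg.mul_const (0:ℝ)
    refine h.congr_deriv (Eq.symm ?_)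
    ring
  -- J 2 2
  have hJ22 : J 2 2 = -(k2 u2s) := by
    rw [hJ, hG2]
    apply my_fderiv_single hf2
    show HasDerivAt _ _ (0:ℝ)
    have he : (fun t => f2 (Function.update pt 2 t)) = fun t => -(k2 u2s) * t := by
      funext t; rw [hu2 t]; rfl
    rw [he]
    have h := (hasDerivAt_id (0:ℝ)).const_mul (-(k2 u2s))
    refine h.congr_deriv (Eq.symm ?_)
    ring
  -- signs
  have hrpos : 0 < U1 ^ (δ - 1) := Real.rpow_pos_of_pos hU1pos _
  have hA1 : J 0 0 < 0 := by
    rw [hJ00]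
    have h1 : 0 < δ ^ 2 * k3 0 * u2s * U1 ^ (δ - 1) :=
      mul_pos (mul_pos (mul_pos (pow_pos hδ0 2) (hk3pos 0)) hu2s) hrpos
    have h2 := hk1pos u2s
    linarith
  have hA2 : J 0 1 < 0 := by
    rw [hJ01]
    have h1 : 0 < k1' u2s * U1 := mul_pos (hk1'pos u2s) hU1pos
    have h2 : 0 < (k4 / μ) * (δ - η * μ) := mul_pos (div_pos hk4 hμ) (by linarith)
    linarith
  have hA3 : 0 < J 1 0 := by
    rw [hJ10]
    exact mul_pos (mul_pos (mul_pos (mul_pos hδ0 hμ) (hk3pos 0)) hu2s) hrpos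
  have hA4 : J 2 2 < 0 := by rw [hJ22]; linarith [hk2pos u2s]
  refine ⟨hJ00, hA1, hJ01, hA2, hJ10, hA3, hJ11, hJ20, hJ21, hJ22, hA4, ?_⟩
  intro lam hmem
  rw [spectrum.mem_iff] at hmem
  set M : Matrix (Fin 3) (Fin 3) ℂ := J.map Complex.ofReal with hM
  have hdet : (algebraMap ℂ (Matrix (Fin 3) (Fin 3) ℂ) lam - M).det = 0 := by
    by_contra hne
    exact hmem ((Matrix.isUnit_iff_isUnit_det _).2 (isUnit_iff_ne_zero.2 hne))
  rw [Matrix.det_fin_three] at hdet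
  simp only [Matrix.sub_apply, Matrix.algebraMap_matrix_apply, Matrix.map_apply, hM,
    if_pos rfl] at hdet
  -- clean up the off-diagonal ifs
  norm_num at hdet
  have hfac : (lam - (J 2 2 : ℂ)) *
      (lam ^ 2 + (-(J 0 0) : ℝ) * lam + (-(J 0 1 * J 1 0) : ℝ)) = 0 := by
    push_cast
    rw [hJ11, hJ20, hJ21] at hdet
    push_cast at hdet
    linear_combination hdet
  rcases mul_eq_zero.1 hfac with h | h
  · have : lam = (J 2 2 : ℂ) := sub_eq_zero.1 h
    rw [this]
    simpa using hA4
  · exact quad_neg_re _ _ (by linarith) (by nlinarith) lam h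
end

section
/- For the planar subsystem with δ ≥ ημ and nonnegative initial data, the quantity u_1 + η u_2 is nonincreasing along solutions (d/dt(u_1 + η u_2) = -(δ - ημ) k_3 u_2 u_1^δ ≤ 0), and hence both u_1(t) and u_2(t) remain bounded by (u_1(0) + η u_2(0))/min(1, η) for all t ≥ 0. -/
/-- For the planar subsystem with δ ≥ ημ and nonnegative solutions,
u₁ + η u₂ is nonincreasing (its derivative is -(δ-ημ) k₃ u₂ u₁^δ ≤ 0), hence
u₁(t) and u₂(t) are bounded by (u₁(0) + η u₂(0))/min 1 η for all t ≥ 0. -/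
theorem stmt_17
    (δ η μ k3 k4 : ℝ)
    (hδ : 0 < δ) (hη : 0 < η) (hμ : 0 < μ) (hk3 : 0 < k3) (hk4 : 0 < k4)
    (hδημ : η * μ ≤ δ)
    (u1 u2 : ℝ → ℝ)
    (hnonneg : ∀ t, 0 ≤ t → 0 ≤ u1 t ∧ 0 ≤ u2 t)
    (h1 : ∀ t, 0 ≤ t → HasDerivAt u1 (-δ * k3 * u2 t * (u1 t) ^ δ + η * k4 * u2 t) t)
    (h2 : ∀ t, 0 ≤ t → HasDerivAt u2 (μ * k3 * u2 t * (u1 t) ^ δ - k4 * u2 t) t) :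
    (∀ t, 0 ≤ t → HasDerivAt (fun τ => u1 τ + η * u2 τ)
        (-(δ - η * μ) * k3 * u2 t * (u1 t) ^ δ) t ∧
        -(δ - η * μ) * k3 * u2 t * (u1 t) ^ δ ≤ 0) ∧
    (∀ s t, 0 ≤ s → s ≤ t → u1 t + η * u2 t ≤ u1 s + η * u2 s) ∧
    (∀ t, 0 ≤ t → u1 t ≤ (u1 0 + η * u2 0) / min 1 η ∧
                   u2 t ≤ (u1 0 + η * u2 0) / min 1 η) := by
  have hder : ∀ t, 0 ≤ t → HasDerivAt (fun τ => u1 τ + η * u2 τ)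
      (-(δ - η * μ) * k3 * u2 t * (u1 t) ^ δ) t := by
    intro t ht
    have := (h1 t ht).add ((h2 t ht).const_mul η)
    refine this.congr_deriv ?_
    ring
  have hnp : ∀ t, 0 ≤ t → -(δ - η * μ) * k3 * u2 t * (u1 t) ^ δ ≤ 0 := by
    intro t ht
    have h4 : 0 ≤ (u1 t) ^ δ := Real.rpow_nonneg (hnonneg t ht).1 δ
    have h2' := (hnonneg t ht).2
    nlinarith [mul_nonneg (mul_nonneg (mul_nonneg (sub_nonneg.2 hδημ) hk3.le) h2') h4]
  have hmono : AntitoneOn (fun τ => u1 τ + η * u2 τ) (Set.Ici 0) := by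
    apply antitoneOn_of_deriv_nonpos (convex_Ici 0)
    · intro t ht
      exact (hder t ht).continuousAt.continuousWithinAt
    · intro t ht
      rw [interior_Ici] at ht
      exact (hder t ht.le).differentiableAt.differentiableWithinAt
    · intro t ht
      rw [interior_Ici] at ht
      rw [(hder t ht.le).deriv]
      exact hnp t ht.le
  have hmono' : ∀ s t, 0 ≤ s → s ≤ t → u1 t + η * u2 t ≤ u1 s + η * u2 s := by
    intro s t hs hst
    exact hmono hs (le_trans hs hst) hst
  refine ⟨fun t ht => ⟨hder t ht, hnp t ht⟩, hmono', ?_⟩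
  intro t ht
  have hm : 0 < min 1 η := lt_min one_pos hη
  have hS : u1 t + η * u2 t ≤ u1 0 + η * u2 0 := hmono' 0 t le_rfl ht
  have h1' := (hnonneg t ht).1
  have h2' := (hnonneg t ht).2
  have hm1 : min 1 η ≤ 1 := min_le_left _ _
  have hm2 : min 1 η ≤ η := min_le_right _ _
  constructor
  · rw [le_div_iff₀ hm]
    nlinarith
  · rw [le_div_iff₀ hm]
    nlinarith
end
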